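/- arXiv:2402.03075 — 5 statements merged into one kernel-verified Lean document; each statement's English description precedes it below -/
import Mathlib

section
/- For 1 < p < ∞ and any nonnegative measurable function f on (0,∞), the Hardy operator H f(x) = (1/x) ∫₀ˣ f(t) dt satisfies ‖Hf‖_{L^p(0,∞)} ≤ (p/(p-1)) ‖f‖_{L^p(0,∞)}. -/
open MeasureTheory Set ENNReal

lemma hardy_lintegral_rpow_Ioo (r x : ℝ) (hr : -1 < r) (hx : 0 < x) :
    ∫⁻ t in Ioo (0:ℝ) x, ENNReal.ofReal (t ^ r) = ENNReal.ofReal (x ^ (r+1) / (r+1)) := by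
  have hint : IntegrableOn (fun t : ℝ => t ^ r) (Ioo 0 x) := by
    have := (intervalIntegral.intervalIntegrable_rpow' (a := 0) (b := x) hr)
    rwa [intervalIntegrable_iff_integrableOn_Ioo_of_le hx.le] at this
  rw [← MeasureTheory.ofReal_integral_eq_lintegral_ofReal hint]
  · congr 1
    rw [← MeasureTheory.integral_Ioc_eq_integral_Ioo,
        ← intervalIntegral.integral_of_le hx.le, integral_rpow (Or.inl hr),
        Real.zero_rpow (by linarith)]
    ring
  · filter_upwards [ae_restrict_mem measurableSet_Ioo] with t ht
    exact Real.rpow_nonneg ht.1.le r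

lemma hardy_lintegral_rpow_Ioi (e t : ℝ) (he : e < -1) (ht : 0 < t) :
    ∫⁻ x in Ioi t, ENNReal.ofReal (x ^ e) = ENNReal.ofReal (-t ^ (e+1) / (e+1)) := by
  rw [← MeasureTheory.ofReal_integral_eq_lintegral_ofReal
      (integrableOn_Ioi_rpow_of_lt he ht)]
  · rw [integral_Ioi_rpow_of_lt he ht]
  · filter_upwards [ae_restrict_mem measurableSet_Ioi] with x hx
    exact Real.rpow_nonneg (ht.trans hx).le e

-- pointwise Hölder bound
lemma hardy_pointwise (p : ℝ) (hp : 1 < p) (f : ℝ → ℝ≥0∞) (hf : Measurable f)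
    (x : ℝ) (hx : 0 < x) :
    ((ENNReal.ofReal x)⁻¹ * ∫⁻ t in Ioo (0:ℝ) x, f t) ^ p ≤
      ENNReal.ofReal ((p/(p-1)) ^ (p-1)) * ENNReal.ofReal (x ^ ((1-2*p)/p)) *
        ∫⁻ t in Ioo (0:ℝ) x, f t ^ p * ENNReal.ofReal (t ^ ((p-1)/p)) := by
  have hp0 : (0:ℝ) < p := by linarith
  have hp1 : (0:ℝ) < p - 1 := by linarith
  have hpq : p.HolderConjugate (p/(p-1)) := Real.HolderConjugate.conjExponent hp
  set q : ℝ := p / (p - 1) with hq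
  have hq0 : (0:ℝ) < q := by positivity
  set u : ℝ := (p-1)/p^2 with hu
  set A : ℝ≥0∞ := ∫⁻ t in Ioo (0:ℝ) x, f t ^ p * ENNReal.ofReal (t ^ ((p-1)/p)) with hA
  -- Hölder
  have holder : (∫⁻ t in Ioo (0:ℝ) x, f t) ≤
      A ^ (1/p) * (∫⁻ t in Ioo (0:ℝ) x, ENNReal.ofReal (t ^ (-(1/p)))) ^ (1/q) := by
    have key := ENNReal.lintegral_mul_le_Lp_mul_Lq (volume.restrict (Ioo (0:ℝ) x)) hpq
      (f := fun t => f t * ENNReal.ofReal (t ^ u))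
      (g := fun t => ENNReal.ofReal (t ^ (-u)))
      ((hf.mul (by fun_prop)).aemeasurable) (by fun_prop)
    have h1 : ∫⁻ t in Ioo (0:ℝ) x, f t =
        ∫⁻ t in Ioo (0:ℝ) x,
          ((fun t => f t * ENNReal.ofReal (t ^ u)) * fun t => ENNReal.ofReal (t ^ (-u))) t := by
      refine setLIntegral_congr_fun_ae measurableSet_Ioo ?_
      filter_upwards with t ht
      have ht0 : (0:ℝ) < t := ht.1
      simp only [Pi.mul_apply]
      rw [mul_assoc, ← ENNReal.ofReal_mul (Real.rpow_nonneg ht0.le _),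
          ← Real.rpow_add ht0]
      norm_num
    have h2 : ∫⁻ t in Ioo (0:ℝ) x, (f t * ENNReal.ofReal (t ^ u)) ^ p = A := by
      refine setLIntegral_congr_fun_ae measurableSet_Ioo ?_
      filter_upwards with t ht
      have ht0 : (0:ℝ) < t := ht.1
      rw [ENNReal.mul_rpow_of_nonneg _ _ hp0.le,
          ENNReal.ofReal_rpow_of_pos (Real.rpow_pos_of_pos ht0 _),
          ← Real.rpow_mul ht0.le]
      have hup : u * p = (p-1)/p := by rw [hu]; field_simp
      rw [hup]
    have h3 : ∫⁻ t in Ioo (0:ℝ) x, ENNReal.ofReal (t ^ (-u)) ^ q =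
        ∫⁻ t in Ioo (0:ℝ) x, ENNReal.ofReal (t ^ (-(1/p))) := by
      refine setLIntegral_congr_fun_ae measurableSet_Ioo ?_
      filter_upwards with t ht
      have ht0 : (0:ℝ) < t := ht.1
      rw [ENNReal.ofReal_rpow_of_pos (Real.rpow_pos_of_pos ht0 _),
          ← Real.rpow_mul ht0.le]
      have huq : -u * q = -(1/p) := by rw [hu, hq]; field_simp
      rw [huq]
    calc (∫⁻ t in Ioo (0:ℝ) x, f t) = _ := h1
      _ ≤ _ := key
      _ = A ^ (1/p) * (∫⁻ t in Ioo (0:ℝ) x, ENNReal.ofReal (t ^ (-(1/p)))) ^ (1/q) := by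
          rw [← h3]
          congr 1
          rw [← h2]
  -- compute the second factor
  have hB : ∫⁻ t in Ioo (0:ℝ) x, ENNReal.ofReal (t ^ (-(1/p))) =
      ENNReal.ofReal (q * x ^ (1/q)) := by
    have hr : (-1:ℝ) < -(1/p) := by
      have : 1/p < 1 := by rw [div_lt_one hp0]; exact hp
      linarith
    rw [hardy_lintegral_rpow_Ioo _ _ hr hx]
    have h1q : -(1/p) + 1 = 1/q := by rw [hq]; field_simp; ring
    rw [h1q, div_eq_mul_inv, one_div, inv_inv, mul_comm]
  -- raise Hölder to the power p
  have hIp : (∫⁻ t in Ioo (0:ℝ) x, f t) ^ p ≤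
      A * ENNReal.ofReal (q ^ (p-1) * x ^ ((1/q)*(p-1))) := by
    calc (∫⁻ t in Ioo (0:ℝ) x, f t) ^ p
        ≤ (A ^ (1/p) * (ENNReal.ofReal (q * x ^ (1/q))) ^ (1/q)) ^ p := by
          rw [← hB]; exact ENNReal.rpow_le_rpow holder hp0.le
      _ = A * ENNReal.ofReal (q ^ (p-1) * x ^ ((1/q)*(p-1))) := by
          rw [ENNReal.mul_rpow_of_nonneg _ _ hp0.le, ← ENNReal.rpow_mul,
              ← ENNReal.rpow_mul, one_div_mul_cancel hp0.ne', ENNReal.rpow_one]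
          congr 1
          have hqp : (1/q) * p = p - 1 := by rw [hq]; field_simp
          rw [hqp, ENNReal.ofReal_rpow_of_pos (by positivity),
              Real.mul_rpow hq0.le (Real.rpow_nonneg hx.le _),
              ← Real.rpow_mul hx.le]
  -- assemble
  calc ((ENNReal.ofReal x)⁻¹ * ∫⁻ t in Ioo (0:ℝ) x, f t) ^ p
      = ENNReal.ofReal (x ^ (-p)) * (∫⁻ t in Ioo (0:ℝ) x, f t) ^ p := by
        rw [ENNReal.mul_rpow_of_nonneg _ _ hp0.le, ← ENNReal.rpow_neg_one,
            ← ENNReal.rpow_mul, neg_one_mul, ENNReal.ofReal_rpow_of_pos hx]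
    _ ≤ ENNReal.ofReal (x ^ (-p)) * (A * ENNReal.ofReal (q ^ (p-1) * x ^ ((1/q)*(p-1)))) :=
        mul_le_mul_right hIp _
    _ = ENNReal.ofReal (q ^ (p-1)) * ENNReal.ofReal (x ^ ((1-2*p)/p)) * A := by
        rw [ENNReal.ofReal_mul (by positivity)]
        rw [show ENNReal.ofReal (x ^ (-p)) *
              (A * (ENNReal.ofReal (q ^ (p-1)) * ENNReal.ofReal (x ^ ((1/q)*(p-1))))) =
            ENNReal.ofReal (q ^ (p-1)) *
              (ENNReal.ofReal (x ^ (-p)) * ENNReal.ofReal (x ^ ((1/q)*(p-1)))) * A from by ring]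
        rw [← ENNReal.ofReal_mul (Real.rpow_nonneg hx.le _), ← Real.rpow_add hx]
        congr 3
        rw [hq]; field_simp; ring

/-- Hardy's inequality: for `1 < p < ∞` and a nonnegative measurable function `f` on `(0,∞)`,
the Hardy operator `H f (x) = (1/x) ∫₀ˣ f(t) dt` satisfies
`‖Hf‖_{L^p(0,∞)} ≤ (p/(p-1)) ‖f‖_{L^p(0,∞)}`. -/
theorem hardy_inequality (p : ℝ) (hp : 1 < p) (f : ℝ → ℝ≥0∞) (hf : Measurable f) :
    (∫⁻ x in Ioi (0 : ℝ), ((ENNReal.ofReal x)⁻¹ * ∫⁻ t in Ioo (0 : ℝ) x, f t) ^ p) ^ (1 / p)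
      ≤ ENNReal.ofReal (p / (p - 1)) * (∫⁻ t in Ioi (0 : ℝ), (f t) ^ p) ^ (1 / p) := by
  have hp0 : (0:ℝ) < p := by linarith
  have hp1 : (0:ℝ) < p - 1 := by linarith
  set q : ℝ := p / (p - 1) with hq
  have hq0 : (0:ℝ) < q := by positivity
  set s : ℝ := (p-1)/p with hs
  set e : ℝ := (1-2*p)/p with he
  have he1 : e < -1 := by
    rw [he, div_lt_iff₀ hp0]; linarith
  set g : ℝ → ℝ≥0∞ := fun t => f t ^ p * ENNReal.ofReal (t ^ s) with hgdef
  have hg : Measurable g := by fun_prop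
  -- Tonelli
  have swap : (∫⁻ x in Ioi (0:ℝ), ENNReal.ofReal (x ^ e) * ∫⁻ t in Ioo (0:ℝ) x, g t)
      = ∫⁻ t in Ioi (0:ℝ), g t * ∫⁻ x in Ioi t, ENNReal.ofReal (x ^ e) := by
    have inner_eq : ∀ x : ℝ, (∫⁻ t in Ioo (0:ℝ) x, g t)
        = ∫⁻ t in Ioi (0:ℝ), (Iio x).indicator g t := by
      intro x
      rw [lintegral_indicator measurableSet_Iio,
          Measure.restrict_restrict measurableSet_Iio, Set.Iio_inter_Ioi]
    calc (∫⁻ x in Ioi (0:ℝ), ENNReal.ofReal (x ^ e) * ∫⁻ t in Ioo (0:ℝ) x, g t)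
        = ∫⁻ x in Ioi (0:ℝ), ∫⁻ t in Ioi (0:ℝ),
            ENNReal.ofReal (x ^ e) * (Iio x).indicator g t := by
          refine lintegral_congr fun x => ?_
          rw [inner_eq, lintegral_const_mul' _ _ ENNReal.ofReal_ne_top]
      _ = ∫⁻ t in Ioi (0:ℝ), ∫⁻ x in Ioi (0:ℝ),
            ENNReal.ofReal (x ^ e) * (Iio x).indicator g t := by
          refine lintegral_lintegral_swap ?_
          have hm : Measurable fun z : ℝ × ℝ =>
              ENNReal.ofReal (z.1 ^ e) * {a : ℝ × ℝ | a.2 < a.1}.indicator (fun a => g a.2) z := by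
            apply Measurable.mul
            · fun_prop
            · exact (hg.comp measurable_snd).indicator
                (measurableSet_lt measurable_snd measurable_fst)
          exact hm.aemeasurable
      _ = ∫⁻ t in Ioi (0:ℝ), g t * ∫⁻ x in Ioi t, ENNReal.ofReal (x ^ e) := by
          refine setLIntegral_congr_fun_ae measurableSet_Ioi ?_
          filter_upwards with t ht
          have : (fun x => ENNReal.ofReal (x ^ e) * (Iio x).indicator g t)
              = fun x => (Ioi t).indicator (fun x => g t * ENNReal.ofReal (x ^ e)) x := by
            funext x
            by_cases hxt : t < x <;>
              simp [Set.indicator_apply, hxt, mul_comm]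
          rw [this, lintegral_indicator measurableSet_Ioi,
              Measure.restrict_restrict measurableSet_Ioi,
              Set.inter_eq_left.mpr (Ioi_subset_Ioi ht.le),
              lintegral_const_mul _ (by fun_prop)]
  have hJ : ∀ t ∈ Ioi (0:ℝ),
      g t * (∫⁻ x in Ioi t, ENNReal.ofReal (x ^ e)) = ENNReal.ofReal q * f t ^ p := by
    intro t ht
    have ht0 : (0:ℝ) < t := ht
    rw [hardy_lintegral_rpow_Ioi e t he1 ht0]
    have h1 : -t ^ (e+1) / (e+1) = q * t ^ (-s) := by
      have he2 : e + 1 = -s := by rw [he, hs]; field_simp; ring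
      rw [he2, neg_div, div_neg, neg_neg, div_eq_mul_inv, mul_comm, hs, hq, inv_div]
    rw [h1, ENNReal.ofReal_mul hq0.le]
    calc f t ^ p * ENNReal.ofReal (t ^ s) * (ENNReal.ofReal q * ENNReal.ofReal (t ^ (-s)))
        = ENNReal.ofReal q * f t ^ p *
            (ENNReal.ofReal (t ^ s) * ENNReal.ofReal (t ^ (-s))) := by ring
      _ = ENNReal.ofReal q * f t ^ p := by
          rw [← ENNReal.ofReal_mul (Real.rpow_nonneg ht0.le _), ← Real.rpow_add ht0]
          norm_num
  calc (∫⁻ x in Ioi (0 : ℝ), ((ENNReal.ofReal x)⁻¹ * ∫⁻ t in Ioo (0 : ℝ) x, f t) ^ p) ^ (1 / p)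
      ≤ (ENNReal.ofReal (q ^ (p-1)) *
          ∫⁻ x in Ioi (0:ℝ), ENNReal.ofReal (x ^ e) * ∫⁻ t in Ioo (0:ℝ) x, g t) ^ (1/p) := by
        apply ENNReal.rpow_le_rpow _ (by positivity)
        rw [← lintegral_const_mul' _ _ ENNReal.ofReal_ne_top]
        refine lintegral_mono_ae ?_
        filter_upwards [ae_restrict_mem measurableSet_Ioi] with x hx
        have := hardy_pointwise p hp f hf x hx
        simpa [hgdef, hs, hq, he, mul_assoc] using this
    _ = (ENNReal.ofReal (q ^ (p-1)) *
          (ENNReal.ofReal q * ∫⁻ t in Ioi (0:ℝ), f t ^ p)) ^ (1/p) := by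
        rw [swap]
        congr 2
        rw [setLIntegral_congr_fun_ae measurableSet_Ioi
            (by filter_upwards with t ht; exact hJ t ht),
          lintegral_const_mul' _ _ ENNReal.ofReal_ne_top]
    _ = ENNReal.ofReal q * (∫⁻ t in Ioi (0:ℝ), f t ^ p) ^ (1/p) := by
        rw [← mul_assoc, ← ENNReal.ofReal_mul (by positivity),
            show q ^ (p-1) * q = q ^ p from by
              rw [← Real.rpow_add_one hq0.ne' (p-1), sub_add_cancel],
            ENNReal.mul_rpow_of_nonneg _ _ (by positivity),
            ENNReal.ofReal_rpow_of_pos (by positivity),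
            ← Real.rpow_mul hq0.le, mul_one_div_cancel hp0.ne', Real.rpow_one]
end

section
/- For 1 < p < ∞, the constant p/(p-1) is optimal in Hardy's inequality: for every constant C with ‖Hf‖_{L^p(0,∞)} ≤ C‖f‖_{L^p(0,∞)} for all nonnegative f ∈ L^p(0,∞), one has C ≥ p/(p-1). -/
open MeasureTheory Set ENNReal Filter Topology

lemma aux_lintegral_Ioi {b : ℝ} (hb : b < -1) {c : ℝ} (hc : 0 < c) :
    ∫⁻ x in Ioi c, ENNReal.ofReal (x ^ b) = ENNReal.ofReal (c ^ (b + 1) / (-(b + 1))) := by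
  rw [← ofReal_integral_eq_lintegral_ofReal (integrableOn_Ioi_rpow_of_lt hb hc)
      ((ae_restrict_iff' measurableSet_Ioi).2 (Filter.Eventually.of_forall fun x hx =>
        Real.rpow_nonneg (hc.trans hx).le b))]
  rw [integral_Ioi_rpow_of_lt hb hc]
  congr 1
  rw [neg_div, div_neg]

lemma aux_lintegral_Ioo {a : ℝ} (ha : -1 < a) {x : ℝ} (hx : 1 ≤ x) :
    ∫⁻ t in Ioo (1:ℝ) x, ENNReal.ofReal (t ^ a)
      = ENNReal.ofReal ((x ^ (a + 1) - 1) / (a + 1)) := by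
  have hint : IntegrableOn (fun t : ℝ => t ^ a) (Ioo 1 x) := by
    have := (intervalIntegral.intervalIntegrable_rpow' (a := 1) (b := x) ha)
    rw [intervalIntegrable_iff_integrableOn_Ioc_of_le hx] at this
    exact this.mono_set Ioo_subset_Ioc_self
  rw [← ofReal_integral_eq_lintegral_ofReal hint
      ((ae_restrict_iff' measurableSet_Ioo).2 (Filter.Eventually.of_forall fun t ht =>
        Real.rpow_nonneg (by linarith [ht.1]) a))]
  congr 1
  rw [← integral_Ioc_eq_integral_Ioo, ← intervalIntegral.integral_of_le hx,
    integral_rpow (Or.inl ha), Real.one_rpow]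

/-- Sharpness of Hardy's inequality: for `1 < p < ∞`, any constant `C` such that
`‖Hf‖_{L^p(0,∞)} ≤ C ‖f‖_{L^p(0,∞)}` for all nonnegative measurable `f ∈ L^p(0,∞)`
must satisfy `C ≥ p/(p-1)`. -/
theorem hardy_constant_sharp (p : ℝ) (hp : 1 < p) (C : ℝ≥0∞)
    (hC : ∀ f : ℝ → ℝ≥0∞, Measurable f →
      (∫⁻ t in Ioi (0 : ℝ), (f t) ^ p) ^ (1 / p) < ⊤ →
      (∫⁻ x in Ioi (0 : ℝ), ((ENNReal.ofReal x)⁻¹ * ∫⁻ t in Ioo (0 : ℝ) x, f t) ^ p) ^ (1 / p)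
        ≤ C * (∫⁻ t in Ioi (0 : ℝ), (f t) ^ p) ^ (1 / p)) :
    ENNReal.ofReal (p / (p - 1)) ≤ C := by
  have hp0 : 0 < p := by linarith
  obtain ⟨q, hq_def⟩ : ∃ q : ℝ, q = 1 - 1/p := ⟨_, rfl⟩
  have hq0 : 0 < q := by
    have h1 : 1/p < 1 := by rw [div_lt_one hp0]; exact hp
    simp only [hq_def]; linarith
  have hq1 : q < 1 := by
    have : 0 < 1/p := by positivity
    simp only [hq_def]; linarith
  have hpq : p / (p - 1) = 1/q := by
    have hq : q = (p-1)/p := by rw [hq_def]; field_simp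
    rw [hq, one_div_div]
  have key : ∀ η : ℝ, 0 < η → η < 1 → ENNReal.ofReal ((1-η)^2 / q) ≤ C := by
    intro η hη0 hη1
    -- choose ε small enough
    obtain ⟨ε, ⟨hε0, hεq2⟩, hε2, hε3⟩ :
        ∃ ε : ℝ, ε ∈ Ioo (0:ℝ) (q/2) ∧ 1 - η ≤ (2:ℝ) ^ (-ε) ∧ 1 - η ≤ η ^ (ε / (q - ε)) := by
      have h1 : ∀ᶠ ε in 𝓝[>] (0:ℝ), ε ∈ Ioo (0:ℝ) (q/2) :=
        Filter.eventually_of_mem (Ioo_mem_nhdsGT_of_mem ⟨le_refl 0, half_pos hq0⟩)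
          (fun x hx => hx)
      have t2 : Filter.Tendsto (fun ε : ℝ => (2:ℝ) ^ (-ε)) (𝓝[>] 0) (𝓝 1) := by
        have hc : ContinuousAt (fun ε : ℝ => (2:ℝ) ^ (-ε)) 0 :=
          (Real.continuousAt_const_rpow (by norm_num)).comp continuousAt_id.neg
        have h0 : Filter.Tendsto (fun ε : ℝ => (2:ℝ) ^ (-ε)) (𝓝 0) (𝓝 1) := by
          simpa using hc.tendsto
        exact h0.mono_left nhdsWithin_le_nhds
      have h2 := t2.eventually_const_le (show 1 - η < 1 by linarith)
      have t3 : Filter.Tendsto (fun ε : ℝ => η ^ (ε / (q - ε))) (𝓝[>] 0) (𝓝 1) := by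
        have hc : ContinuousAt (fun ε : ℝ => η ^ (ε / (q - ε))) 0 := by
          apply ContinuousAt.comp (Real.continuousAt_const_rpow hη0.ne')
          exact continuousAt_id.div (continuousAt_const.sub continuousAt_id)
            (by simpa using hq0.ne')
        have h0 : Filter.Tendsto (fun ε : ℝ => η ^ (ε / (q - ε))) (𝓝 0) (𝓝 1) := by
          simpa using hc.tendsto
        exact h0.mono_left nhdsWithin_le_nhds
      have h3 := t3.eventually_const_le (show 1 - η < 1 by linarith)
      exact ((h1.and (h2.and h3)).exists).imp (fun ε h => ⟨h.1, h.2.1, h.2.2⟩)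
    obtain ⟨a, ha_def⟩ : ∃ a : ℝ, a = -(1/p) - ε := ⟨_, rfl⟩
    have ha1 : a + 1 = q - ε := by rw [ha_def, hq_def]; ring
    have ha1pos : 0 < a + 1 := by rw [ha1]; linarith
    have ha1q : a + 1 ≤ q := by rw [ha1]; linarith
    have haneg : -1 < a := by linarith
    have hap : a * p = -1 - ε * p := by
      rw [ha_def, sub_mul, neg_mul, one_div_mul_cancel hp0.ne']
    have hap1 : a * p < -1 := by nlinarith
    have hεp : 0 < ε * p := mul_pos hε0 hp0
    obtain ⟨B, hB_def⟩ : ∃ B : ℝ, B = η ^ (-(1/(a+1))) := ⟨_, rfl⟩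
    have hB0 : 0 ≤ B := hB_def ▸ Real.rpow_nonneg hη0.le _
    obtain ⟨A, hA_def⟩ : ∃ A : ℝ, A = max 2 B := ⟨_, rfl⟩
    have hA2 : (2:ℝ) ≤ A := hA_def ▸ le_max_left _ _
    have hA1 : (1:ℝ) < A := by linarith
    have hA0 : (0:ℝ) < A := by linarith
    obtain ⟨f, hf_def⟩ : ∃ f : ℝ → ℝ≥0∞,
        f = Set.indicator (Ioi 1) (fun t => ENNReal.ofReal (t ^ a)) := ⟨_, rfl⟩
    have hg_meas : Measurable fun t : ℝ => ENNReal.ofReal (t ^ a) := by fun_prop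
    have hf_meas : Measurable f := hf_def ▸ hg_meas.indicator measurableSet_Ioi
    -- the L^p norm of f
    have hnorm : ∫⁻ t in Ioi (0:ℝ), (f t) ^ p = ENNReal.ofReal (1 / (ε * p)) := by
      have hfp : ∀ t : ℝ, (f t) ^ p
          = Set.indicator (Ioi 1) (fun t => ENNReal.ofReal (t ^ (a*p))) t := by
        intro t
        by_cases ht : t ∈ Ioi 1
        · rw [hf_def]
          simp only [Set.indicator_of_mem ht]
          have ht0 : (0:ℝ) ≤ t := by
            have := ht
            simp only [mem_Ioi] at this
            linarith
          rw [ENNReal.ofReal_rpow_of_nonneg (Real.rpow_nonneg ht0 a) hp0.le]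
          congr 1
          rw [← Real.rpow_mul ht0]
        · rw [hf_def]
          simp only [Set.indicator_of_notMem ht]
          exact ENNReal.zero_rpow_of_pos hp0
      simp_rw [hfp]
      rw [lintegral_indicator measurableSet_Ioi, Measure.restrict_restrict measurableSet_Ioi]
      have hinter : Ioi (1:ℝ) ∩ Ioi 0 = Ioi 1 := by
        rw [Set.Ioi_inter_Ioi]; norm_num
      rw [hinter, aux_lintegral_Ioi hap1 zero_lt_one, Real.one_rpow]
      congr 1
      rw [hap]; ring_nf
    obtain ⟨N, hN_def⟩ : ∃ N : ℝ≥0∞, N = ENNReal.ofReal (1/(ε*p)) ^ (1/p) := ⟨_, rfl⟩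
    have hN_ne_top : N ≠ ⊤ := by
      rw [hN_def]
      exact (ENNReal.rpow_lt_top_of_nonneg (by positivity) ENNReal.ofReal_ne_top).ne
    have hN_ne0 : N ≠ 0 := by
      rw [hN_def]
      exact (ENNReal.rpow_pos (ENNReal.ofReal_pos.2 (by positivity)) ENNReal.ofReal_ne_top).ne'
    have hfin : (∫⁻ t in Ioi (0:ℝ), (f t)^p)^(1/p) < ⊤ := by
      rw [hnorm]
      exact ENNReal.rpow_lt_top_of_nonneg (by positivity) ENNReal.ofReal_ne_top
    have hmain := hC f hf_meas hfin
    rw [hnorm, ← hN_def] at hmain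
    obtain ⟨k, hk_def⟩ : ∃ k : ℝ, k = (1-η)/(a+1) := ⟨_, rfl⟩
    have hk0 : 0 ≤ k := hk_def ▸ div_nonneg (by linarith) ha1pos.le
    obtain ⟨D, hD_def⟩ : ∃ D : ℝ, D = k * A^(-ε) := ⟨_, rfl⟩
    have hD0 : 0 ≤ D := hD_def ▸ mul_nonneg hk0 (Real.rpow_nonneg hA0.le _)
    -- exact value of the comparison integral over (A, ∞)
    have hcalc : ∫⁻ x in Ioi A, ENNReal.ofReal (k^p * x^(a*p))
        = ENNReal.ofReal (D^p) * ENNReal.ofReal (1/(ε*p)) := by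
      have hsplit : ∀ᵐ x ∂(volume.restrict (Ioi A)), ENNReal.ofReal (k^p * x^(a*p))
          = ENNReal.ofReal (k^p) * ENNReal.ofReal (x^(a*p)) :=
        Filter.Eventually.of_forall fun x => ENNReal.ofReal_mul (by positivity)
      rw [lintegral_congr_ae hsplit, lintegral_const_mul _ (by fun_prop),
        aux_lintegral_Ioi hap1 hA0]
      rw [← ENNReal.ofReal_mul (by positivity)]
      have hexp : a * p + 1 = (-ε) * p := by rw [hap]; ring
      have hexp2 : -((-ε) * p) = ε * p := by ring
      rw [hexp, hexp2]
      have hDp : D^p = k^p * A^((-ε)*p) := by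
        rw [hD_def, Real.mul_rpow hk0 (Real.rpow_nonneg hA0.le _), ← Real.rpow_mul hA0.le]
      rw [← ENNReal.ofReal_mul (by positivity), hDp]
      congr 1
      ring
    -- pointwise lower bound on (A, ∞)
    have hpt : ∀ x ∈ Ioi A, ENNReal.ofReal (k^p * x^(a*p))
        ≤ ((ENNReal.ofReal x)⁻¹ * ∫⁻ t in Ioo (0:ℝ) x, f t)^p := by
      intro x hx
      have hAx : A < x := hx
      have hx1 : (1:ℝ) < x := lt_trans hA1 hAx
      have hx0 : (0:ℝ) < x := lt_trans zero_lt_one hx1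
      have hinner : ∫⁻ t in Ioo (0:ℝ) x, f t = ENNReal.ofReal ((x^(a+1) - 1)/(a+1)) := by
        rw [hf_def, lintegral_indicator measurableSet_Ioi,
          Measure.restrict_restrict measurableSet_Ioi]
        have hinter : Ioi (1:ℝ) ∩ Ioo 0 x = Ioo 1 x := by
          ext t
          simp only [mem_inter_iff, mem_Ioi, mem_Ioo]
          constructor
          · rintro ⟨h1, _, h3⟩; exact ⟨h1, h3⟩
          · rintro ⟨h1, h2⟩; exact ⟨h1, by linarith, h2⟩
        rw [hinter, aux_lintegral_Ioo haneg hx1.le]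
      rw [hinner]
      have hcomb : (ENNReal.ofReal x)⁻¹ * ENNReal.ofReal ((x^(a+1)-1)/(a+1))
          = ENNReal.ofReal ((x^(a+1)-1)/(a+1)/x) := by
        rw [ENNReal.ofReal_div_of_pos hx0, ENNReal.div_eq_inv_mul]
      rw [hcomb]
      have hkxa : k^p * x^(a*p) = (k * x^a)^p := by
        rw [Real.mul_rpow hk0 (Real.rpow_nonneg hx0.le _), ← Real.rpow_mul hx0.le]
      rw [hkxa, ← ENNReal.ofReal_rpow_of_nonneg (mul_nonneg hk0 (Real.rpow_nonneg hx0.le _)) hp0.le]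
      apply ENNReal.rpow_le_rpow _ hp0.le
      apply ENNReal.ofReal_le_ofReal
      -- real inequality: k * x^a ≤ (x^(a+1)-1)/(a+1)/x
      have hxa1 : x^(a+1) = x^a * x := Real.rpow_add_one hx0.ne' a
      have hBx : B ≤ x := by
        refine le_trans (le_max_right 2 B) ?_
        rw [← hA_def]; exact hAx.le
      have hBpow : η⁻¹ ≤ x^(a+1) := by
        have h1 : B^(a+1) ≤ x^(a+1) := Real.rpow_le_rpow hB0 hBx ha1pos.le
        have h2 : B^(a+1) = η⁻¹ := by
          rw [hB_def, ← Real.rpow_mul hη0.le,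
            show -(1/(a+1)) * (a+1) = -1 by field_simp]
          exact Real.rpow_neg_one η
        linarith
      have hxe : (1:ℝ) ≤ η * x^(a+1) := by
        have := mul_le_mul_of_nonneg_left hBpow hη0.le
        rwa [mul_inv_cancel₀ hη0.ne'] at this
      have key2 : (1-η) * x^(a+1) ≤ x^(a+1) - 1 := by linarith
      have hrepr : k * x^a = ((1-η) * x^(a+1)) / ((a+1) * x) := by
        rw [hk_def, hxa1]
        field_simp
      rw [hrepr, div_div]
      gcongr
    -- lower bound for the Hardy integral
    have hlow : ENNReal.ofReal (D^p) * ENNReal.ofReal (1/(ε*p))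
        ≤ ∫⁻ x in Ioi (0:ℝ), ((ENNReal.ofReal x)⁻¹ * ∫⁻ t in Ioo (0:ℝ) x, f t)^p := by
      refine le_trans ?_ (lintegral_mono_set (Ioi_subset_Ioi hA0.le))
      rw [← hcalc]
      exact lintegral_mono_ae ((ae_restrict_iff' measurableSet_Ioi).2
        (Filter.Eventually.of_forall hpt))
    -- conclude ofReal D ≤ C
    have hDN : ENNReal.ofReal D * N ≤ C * N := by
      refine le_trans ?_ hmain
      have heq : ENNReal.ofReal D * N
          = (ENNReal.ofReal (D^p) * ENNReal.ofReal (1/(ε*p)))^(1/p) := by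
        rw [ENNReal.mul_rpow_of_nonneg _ _ (by positivity), hN_def]
        congr 1
        rw [ENNReal.ofReal_rpow_of_nonneg (by positivity) (by positivity),
          ← Real.rpow_mul hD0, mul_one_div_cancel hp0.ne', Real.rpow_one]
      rw [heq]
      exact ENNReal.rpow_le_rpow hlow (by positivity)
    have hDC : ENNReal.ofReal D ≤ C := (ENNReal.mul_le_mul_iff_left hN_ne0 hN_ne_top).1 hDN
    refine le_trans (ENNReal.ofReal_le_ofReal ?_) hDC
    -- (1-η)^2/q ≤ D
    have hAeps : 1 - η ≤ A^(-ε) := by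
      rw [hA_def]
      rcases le_total B 2 with hb | hb
      · rw [max_eq_left hb]; exact hε2
      · rw [max_eq_right hb, hB_def, ← Real.rpow_mul hη0.le]
        have hexp : -(1/(a+1)) * -ε = ε/(q-ε) := by
          rw [ha1]
          field_simp
        rw [hexp]; exact hε3
    have h1 : (1-η)/q ≤ k := by
      rw [hk_def]
      gcongr
    have h2 : (1-η)^2/q = (1-η)/q * (1-η) := by ring
    rw [h2, hD_def]
    exact mul_le_mul h1 hAeps (by linarith) hk0
  -- take the limit η → 0⁺
  have htend : Filter.Tendsto (fun η : ℝ => ENNReal.ofReal ((1-η)^2/q)) (𝓝[>] 0)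
      (𝓝 (ENNReal.ofReal (1/q))) := by
    have hcont : Continuous fun η : ℝ => ENNReal.ofReal ((1-η)^2/q) := by
      exact ENNReal.continuous_ofReal.comp
        (((continuous_const.sub continuous_id).pow 2).div_const q)
    have h0 : Filter.Tendsto (fun η : ℝ => ENNReal.ofReal ((1-η)^2/q)) (𝓝 0)
        (𝓝 (ENNReal.ofReal (1/q))) := by
      simpa using hcont.tendsto 0
    exact h0.mono_left nhdsWithin_le_nhds
  rw [hpq]
  refine le_of_tendsto htend ?_
  filter_upwards [Ioo_mem_nhdsGT zero_lt_one] with η hη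
  exact key η hη.1 hη.2
end

section
/- For n ≥ 1, 1 < p < ∞, and f nonnegative measurable on ℝⁿ, the spherical Hardy operator 𝓗f(x) = (1/(ν_n |x|ⁿ)) ∫_{|y| ≤ |x|} f(y) dy satisfies ‖𝓗f‖_{L^p(ℝⁿ)} ≤ (p/(p-1)) ‖f‖_{L^p(ℝⁿ)}, and the constant p/(p-1) is the operator norm (independent of the dimension n). -/
open MeasureTheory Set ENNReal Metric Module Filter

lemma lintegral_volumeIoiPow' (n : ℕ) (g : ℝ → ℝ≥0∞) (hg : Measurable g) :
    ∫⁻ r : Ioi (0:ℝ), g r ∂(Measure.volumeIoiPow n)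
      = ∫⁻ r in Ioi (0:ℝ), ENNReal.ofReal (r ^ n) * g r := by
  calc ∫⁻ r : Ioi (0:ℝ), g r ∂(Measure.volumeIoiPow n)
      = ∫⁻ r : Ioi (0:ℝ), ENNReal.ofReal ((r:ℝ) ^ n) * g r
          ∂(Measure.comap Subtype.val volume) :=
        lintegral_withDensity_eq_lintegral_mul _
          ((measurable_subtype_coe.pow_const _).ennreal_ofReal)
          (show Measurable fun r : Ioi (0:ℝ) => g r from hg.comp measurable_subtype_coe)
    _ = ∫⁻ r in Ioi (0:ℝ), ENNReal.ofReal (r ^ n) * g r :=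
        lintegral_subtype_comap measurableSet_Ioi (fun r : ℝ => ENNReal.ofReal (r ^ n) * g r)

lemma lintegral_fun_norm_addHaar' {E : Type*} [NormedAddCommGroup E] [NormedSpace ℝ E]
    [MeasurableSpace E] [BorelSpace E] [FiniteDimensional ℝ E] [Nontrivial E]
    (μ : Measure E) [μ.IsAddHaarMeasure] (g : ℝ → ℝ≥0∞) (hg : Measurable g) :
    ∫⁻ x, g ‖x‖ ∂μ = (finrank ℝ E) * μ (ball 0 1) *
      ∫⁻ r in Ioi (0:ℝ), ENNReal.ofReal (r ^ (finrank ℝ E - 1)) * g r := by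
  calc ∫⁻ x, g ‖x‖ ∂μ = ∫⁻ x : ({(0)}ᶜ : Set E), g ‖(x : E)‖ ∂(μ.comap (↑)) := by
        rw [lintegral_subtype_comap (measurableSet_singleton (0:E)).compl (fun x => g ‖x‖),
          restrict_compl_singleton]
    _ = ∫⁻ z : sphere (0 : E) 1 × Ioi (0 : ℝ), g z.2
          ∂(μ.toSphere.prod (.volumeIoiPow (finrank ℝ E - 1))) := by
      convert μ.measurePreserving_homeomorphUnitSphereProd.lintegral_comp_emb
        (Homeomorph.measurableEmbedding _) (fun z => g z.2) using 3
      simp [homeomorphUnitSphereProd, homeomorphSphereProd]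
    _ = μ.toSphere univ * ∫⁻ r : Ioi (0:ℝ), g r ∂(Measure.volumeIoiPow (finrank ℝ E - 1)) := by
      rw [lintegral_prod (f := fun z : sphere (0:E) 1 × Ioi (0:ℝ) => g z.2)
        ((hg.comp (measurable_subtype_coe.comp measurable_snd)).aemeasurable)]
      simp [lintegral_const, mul_comm]
    _ = _ := by
      rw [Measure.toSphere_apply_univ, lintegral_volumeIoiPow' _ _ hg]

lemma lint_rpow_Ioc {b : ℝ} (hb : -1 < b) {r : ℝ} (hr : 0 ≤ r) :
    ∫⁻ s in Ioc (0:ℝ) r, ENNReal.ofReal (s ^ b) = ENNReal.ofReal (r ^ (b+1) / (b+1)) := by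
  have hint : IntegrableOn (fun s : ℝ => s ^ b) (Ioc 0 r) := by
    rw [← intervalIntegrable_iff_integrableOn_Ioc_of_le hr]
    exact intervalIntegral.intervalIntegrable_rpow' hb
  rw [← ofReal_integral_eq_lintegral_ofReal hint ?pos]
  · rw [← intervalIntegral.integral_of_le hr, integral_rpow (Or.inl hb)]
    norm_num [Real.zero_rpow (by linarith : b + 1 ≠ 0)]
  case pos =>
    filter_upwards [ae_restrict_mem measurableSet_Ioc] with s hs
    exact Real.rpow_nonneg hs.1.le _

lemma lint_rpow_Ioi {b : ℝ} (hb : b < -1) {r : ℝ} (hr : 0 < r) :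
    ∫⁻ s in Ioi r, ENNReal.ofReal (s ^ b) = ENNReal.ofReal (r ^ (b+1) / (-(b+1))) := by
  rw [← ofReal_integral_eq_lintegral_ofReal (integrableOn_Ioi_rpow_of_lt hb hr) ?pos]
  · rw [integral_Ioi_rpow_of_lt hb hr]
    rw [div_neg, neg_div]
  case pos =>
    filter_upwards [ae_restrict_mem measurableSet_Ioi] with s hs
    exact Real.rpow_nonneg (hr.le.trans hs.le) _

section Euclidean

variable {n : ℕ}

local notation "E" => EuclideanSpace ℝ (Fin n)
local notation "ν" => volume (ball (0 : EuclideanSpace ℝ (Fin n)) 1)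

lemma nontrivE (hn : 1 ≤ n) : Nontrivial E :=
  Module.nontrivial_of_finrank_pos (R := ℝ)
    (by simp only [finrank_euclideanSpace, Fintype.card_fin]; omega)

lemma nu_pos : 0 < ν := measure_ball_pos volume 0 one_pos

lemma nu_lt_top : ν < ⊤ := measure_ball_lt_top

lemma polarE (hn : 1 ≤ n) (g : ℝ → ℝ≥0∞) (hg : Measurable g) :
    ∫⁻ x : E, g ‖x‖ = n * ν * ∫⁻ s in Ioi (0:ℝ), ENNReal.ofReal (s ^ (n-1)) * g s := by
  haveI := nontrivE hn
  have h := lintegral_fun_norm_addHaar' (volume : Measure E) g hg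
  simpa [finrank_euclideanSpace] using h

/-- combine the power factors on `Ioc 0 r`-type sets -/
lemma pow_mul_rpow {s : ℝ} (hs : 0 < s) (c : ℝ) (hn : 1 ≤ n) :
    ENNReal.ofReal (s ^ (n-1)) * ENNReal.ofReal (s ^ c)
      = ENNReal.ofReal (s ^ ((n:ℝ) - 1 + c)) := by
  rw [← ENNReal.ofReal_mul (by positivity), ← Real.rpow_natCast s (n-1),
    ← Real.rpow_add hs]
  congr 2
  push_cast [Nat.cast_sub hn]
  ring

lemma ball_rpow_int (hn : 1 ≤ n) {c : ℝ} (hc : -(n:ℝ) < c) {r : ℝ} (hr : 0 ≤ r) :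
    ∫⁻ y in closedBall (0:E) r, ENNReal.ofReal (‖y‖ ^ c)
      = n * ν * ENNReal.ofReal (r ^ ((n:ℝ)+c) / ((n:ℝ)+c)) := by
  have hmg : Measurable fun s : ℝ => (Iic r).indicator (fun s => ENNReal.ofReal (s ^ c)) s :=
    Measurable.indicator (by fun_prop) measurableSet_Iic
  calc ∫⁻ y in closedBall (0:E) r, ENNReal.ofReal (‖y‖ ^ c)
      = ∫⁻ y : E, (Iic r).indicator (fun s => ENNReal.ofReal (s ^ c)) ‖y‖ := by
        rw [← lintegral_indicator (measurableSet_closedBall) _]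
        refine lintegral_congr fun y => ?_
        by_cases h : ‖y‖ ≤ r <;>
          simp [Set.indicator, h, mem_closedBall_zero_iff]
    _ = n * ν * ∫⁻ s in Ioi (0:ℝ),
          ENNReal.ofReal (s ^ (n-1)) * (Iic r).indicator (fun s => ENNReal.ofReal (s ^ c)) s :=
        polarE hn _ hmg
    _ = n * ν * ∫⁻ s in Ioc (0:ℝ) r, ENNReal.ofReal (s ^ (n-1)) * ENNReal.ofReal (s ^ c) := by
        congr 1
        rw [← lintegral_indicator measurableSet_Ioi, ← lintegral_indicator measurableSet_Ioc]
        refine lintegral_congr fun s => ?_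
        by_cases h1 : 0 < s <;> by_cases h2 : s ≤ r <;>
          simp [Set.indicator, h1, h2, mem_Ioc, mem_Ioi, and_comm]
    _ = n * ν * ∫⁻ s in Ioc (0:ℝ) r, ENNReal.ofReal (s ^ ((n:ℝ) - 1 + c)) := by
        congr 1
        refine setLIntegral_congr_fun measurableSet_Ioc (fun s hs => ?_)
        exact pow_mul_rpow hs.1 c hn
    _ = n * ν * ENNReal.ofReal (r ^ ((n:ℝ)+c) / ((n:ℝ)+c)) := by
        rw [lint_rpow_Ioc (by push_cast; linarith) hr]
        norm_num
        congr 3 <;> push_cast <;> ring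

lemma ext_rpow_int (hn : 1 ≤ n) {c : ℝ} (hc : c < -(n:ℝ)) {r : ℝ} (hr : 0 < r) :
    ∫⁻ x : E, (Ici r).indicator (fun s => ENNReal.ofReal (s ^ c)) ‖x‖
      = n * ν * ENNReal.ofReal (r ^ ((n:ℝ)+c) / (-((n:ℝ)+c))) := by
  have hmg : Measurable fun s : ℝ => (Ici r).indicator (fun s => ENNReal.ofReal (s ^ c)) s :=
    Measurable.indicator (by fun_prop) measurableSet_Ici
  rw [polarE hn _ hmg]
  congr 1
  calc ∫⁻ s in Ioi (0:ℝ),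
        ENNReal.ofReal (s ^ (n-1)) * (Ici r).indicator (fun s => ENNReal.ofReal (s ^ c)) s
      = ∫⁻ s in Ioi r, ENNReal.ofReal (s ^ (n-1)) * ENNReal.ofReal (s ^ c) := by
        rw [← lintegral_indicator measurableSet_Ioi, ← lintegral_indicator measurableSet_Ioi]
        refine lintegral_congr_ae ?_
        filter_upwards [compl_mem_ae_iff.2 (measure_singleton r)] with s hs
        rcases (Ne.lt_or_gt hs : s < r ∨ r < s) with h | h
        · simp [Set.indicator, h.not_ge, h.not_gt]
        · simp [Set.indicator, h.le, h, hr.trans h]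
    _ = ∫⁻ s in Ioi r, ENNReal.ofReal (s ^ ((n:ℝ) - 1 + c)) :=
        setLIntegral_congr_fun measurableSet_Ioi (fun s hs =>
          pow_mul_rpow (hr.trans hs) c hn)
    _ = ENNReal.ofReal (r ^ ((n:ℝ)+c) / (-((n:ℝ)+c))) := by
        rw [lint_rpow_Ioi (by push_cast; linarith) hr]
        congr 3 <;> push_cast <;> ring

lemma annulus_rpow_int (hn : 1 ≤ n) (c : ℝ) {A B : ℝ} (hA : 0 < A) (hAB : A ≤ B) :
    ∫⁻ x : E, (Ioc A B).indicator (fun s => ENNReal.ofReal (s ^ c)) ‖x‖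
      = n * ν * ENNReal.ofReal (∫ s in A..B, s ^ ((n:ℝ) - 1 + c)) := by
  have hmg : Measurable fun s : ℝ => (Ioc A B).indicator (fun s => ENNReal.ofReal (s ^ c)) s :=
    Measurable.indicator (by fun_prop) measurableSet_Ioc
  rw [polarE hn _ hmg]
  congr 1
  have h0 : (0:ℝ) ∉ Set.uIcc A B := by
    rw [Set.mem_uIcc]
    push_neg
    exact ⟨fun h => absurd h hA.not_ge, fun h => absurd h (hA.trans_le hAB).not_ge⟩
  have hint : IntegrableOn (fun s : ℝ => s ^ ((n:ℝ) - 1 + c)) (Ioc A B) := by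
    rw [← intervalIntegrable_iff_integrableOn_Ioc_of_le hAB]
    exact intervalIntegral.intervalIntegrable_rpow (Or.inr h0)
  calc ∫⁻ s in Ioi (0:ℝ),
        ENNReal.ofReal (s ^ (n-1)) * (Ioc A B).indicator (fun s => ENNReal.ofReal (s ^ c)) s
      = ∫⁻ s in Ioc A B, ENNReal.ofReal (s ^ (n-1)) * ENNReal.ofReal (s ^ c) := by
        rw [← lintegral_indicator measurableSet_Ioi, ← lintegral_indicator measurableSet_Ioc]
        refine lintegral_congr fun s => ?_
        by_cases h : s ∈ Ioc A B
        · simp [Set.indicator, h, mem_Ioi, hA.trans h.1]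
        · by_cases h1 : 0 < s <;> simp [Set.indicator, h, h1]
    _ = ∫⁻ s in Ioc A B, ENNReal.ofReal (s ^ ((n:ℝ) - 1 + c)) :=
        setLIntegral_congr_fun measurableSet_Ioc (fun s hs =>
          pow_mul_rpow (hA.trans hs.1) c hn)
    _ = ENNReal.ofReal (∫ s in A..B, s ^ ((n:ℝ) - 1 + c)) := by
        rw [← ofReal_integral_eq_lintegral_ofReal hint ?pos,
          ← intervalIntegral.integral_of_le hAB]
        case pos =>
          filter_upwards [ae_restrict_mem measurableSet_Ioc] with s hs
          exact Real.rpow_nonneg (hA.trans hs.1).le _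

lemma hardy_upper (hn : 1 ≤ n) {p : ℝ} (hp : 1 < p) (f : E → ℝ≥0∞) (hf : Measurable f) :
    ∫⁻ x : E, ((volume (ball (0:E) ‖x‖))⁻¹ * ∫⁻ y in closedBall (0:E) ‖x‖, f y) ^ p
      ≤ ENNReal.ofReal (p/(p-1)) ^ p * ∫⁻ y : E, f y ^ p := by
  haveI := nontrivE hn
  set q : ℝ := p/(p-1) with hqdef
  have hpq : p.HolderConjugate q := Real.HolderConjugate.conjExponent hp
  have hp0 : (0:ℝ) < p := hpq.pos
  have hq0 : (0:ℝ) < q := hpq.symm.pos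
  have hpq' : p / q = p - 1 := by
    rw [hqdef, div_div_eq_mul_div, mul_comm, mul_div_assoc, div_self (ne_of_gt hp0), mul_one]
  have hsum : p + q = p * q := by
    have h := hpq.inv_add_inv_eq_one
    field_simp at h
    linarith
  have hN : (0:ℝ) < n := by exact_mod_cast hn
  set N : ℝ := (n:ℝ) with hNdef
  set β : ℝ := N/(p*q) with hβdef
  have hβ0 : 0 < β := by positivity
  have hβp : β * p = N/q := by rw [hβdef]; field_simp
  have hβq : β * q = N/p := by rw [hβdef]; field_simp
  have hν0 : ν ≠ 0 := nu_pos.ne'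
  have hνt : ν ≠ ⊤ := nu_lt_top.ne
  set D : ℝ≥0∞ := (n:ℝ≥0∞) * ν with hDdef
  have hD0 : D ≠ 0 := by
    rw [hDdef]
    exact mul_ne_zero (Nat.cast_ne_zero.2 (by omega)) hν0
  have hDt : D ≠ ⊤ := by
    rw [hDdef]
    exact ENNReal.mul_ne_top (ENNReal.natCast_ne_top n) hνt
  set K : ℝ≥0∞ := (ν⁻¹)^p * D^(p-1) * ENNReal.ofReal ((q/N)^(p-1)) with hKdef
  set A : E → ℝ≥0∞ :=
    fun x => ∫⁻ y in closedBall (0:E) ‖x‖, f y ^ p * ENNReal.ofReal (‖y‖ ^ (N/q)) with hAdef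
  -- Step A : pointwise bound
  have stepA : ∀ x : E, x ≠ 0 →
      ((volume (ball (0:E) ‖x‖))⁻¹ * ∫⁻ y in closedBall (0:E) ‖x‖, f y) ^ p
        ≤ K * ENNReal.ofReal (‖x‖ ^ (-N - N/q)) * A x := by
    intro x hx
    have hr : 0 < ‖x‖ := norm_pos_iff.2 hx
    set r : ℝ := ‖x‖ with hrdef
    have hball : volume (ball (0:E) r) = ENNReal.ofReal (r ^ N) * ν := by
      rw [Measure.addHaar_ball volume 0 hr.le]
      congr 2
      rw [finrank_euclideanSpace, Fintype.card_fin, hNdef, Real.rpow_natCast]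
    have hwm : Measurable fun y : E => f y * ENNReal.ofReal (‖y‖ ^ β) := by fun_prop
    have hgm : Measurable fun y : E => ENNReal.ofReal (‖y‖ ^ (-β)) := by fun_prop
    have hae : ∫⁻ y in closedBall (0:E) r, f y
        = ∫⁻ y in closedBall (0:E) r,
            (f y * ENNReal.ofReal (‖y‖ ^ β)) * ENNReal.ofReal (‖y‖ ^ (-β)) := by
      refine lintegral_congr_ae (ae_mono Measure.restrict_le_self ?_)
      filter_upwards [compl_mem_ae_iff.2 (measure_singleton (0:E))] with y hy
      have hy0 : 0 < ‖y‖ := norm_pos_iff.2 hy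
      rw [mul_assoc, ← ENNReal.ofReal_mul (Real.rpow_nonneg (norm_nonneg y) β),
        ← Real.rpow_add hy0]
      simp
    have hHolder := ENNReal.lintegral_mul_le_Lp_mul_Lq
      (volume.restrict (closedBall (0:E) r)) hpq hwm.aemeasurable hgm.aemeasurable
    simp only [Pi.mul_apply] at hHolder
    rw [← hae] at hHolder
    have hfac1 : ∫⁻ y in closedBall (0:E) r, (f y * ENNReal.ofReal (‖y‖ ^ β)) ^ p = A x := by
      refine lintegral_congr fun y => ?_
      rw [ENNReal.mul_rpow_of_nonneg _ _ hp0.le,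
        ENNReal.ofReal_rpow_of_nonneg (Real.rpow_nonneg (norm_nonneg y) β) hp0.le,
        ← Real.rpow_mul (norm_nonneg y), hβp]
    have hfac2 : ∫⁻ y in closedBall (0:E) r, (ENNReal.ofReal (‖y‖ ^ (-β))) ^ q
        = D * ENNReal.ofReal (r ^ (N/q) * (q/N)) := by
      have hptw : ∀ y : E, (ENNReal.ofReal (‖y‖ ^ (-β))) ^ q
          = ENNReal.ofReal (‖y‖ ^ (-(N/p))) := by
        intro y
        rw [ENNReal.ofReal_rpow_of_nonneg (Real.rpow_nonneg (norm_nonneg y) _) hq0.le,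
          ← Real.rpow_mul (norm_nonneg y)]
        congr 2
        rw [neg_mul, hβq]
      have hc : -N < -(N/p) := by
        rw [neg_lt_neg_iff, div_lt_iff₀ hp0]
        nlinarith
      rw [lintegral_congr fun y => hptw y, ball_rpow_int hn hc hr.le]
      have hNe : N + -(N/p) = N/q := by
        field_simp
        nlinarith [hsum]
      rw [hNe, div_eq_mul_inv (r ^ (N/q)), inv_div, hDdef, hNdef]
    rw [hfac1, hfac2] at hHolder
    have hmono : ((volume (ball (0:E) r))⁻¹ * ∫⁻ y in closedBall (0:E) r, f y) ^ p
        ≤ ((volume (ball (0:E) r))⁻¹ *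
            ((A x) ^ (1/p) * (D * ENNReal.ofReal (r ^ (N/q) * (q/N))) ^ (1/q))) ^ p :=
      ENNReal.rpow_le_rpow (mul_le_mul_right hHolder _) hp0.le
    refine hmono.trans_eq ?_
    rw [hball]
    have hr0 : ENNReal.ofReal (r ^ N) ≠ 0 := by
      simp only [ne_eq, ENNReal.ofReal_eq_zero, not_le]
      positivity
    have e1 : ((ENNReal.ofReal (r ^ N) * ν)⁻¹) ^ p
        = ENNReal.ofReal (r ^ (-N*p)) * (ν⁻¹) ^ p := by
      rw [ENNReal.mul_inv (Or.inl hr0) (Or.inl ENNReal.ofReal_ne_top),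
        ENNReal.mul_rpow_of_nonneg _ _ hp0.le,
        ← ENNReal.ofReal_inv_of_pos (by positivity),
        ← Real.rpow_neg hr.le,
        ENNReal.ofReal_rpow_of_nonneg (Real.rpow_nonneg hr.le _) hp0.le,
        ← Real.rpow_mul hr.le]
    have e2 : ((A x) ^ (1/p)) ^ p = A x := by
      rw [← ENNReal.rpow_mul, one_div_mul_cancel hp0.ne', ENNReal.rpow_one]
    have e3 : ((D * ENNReal.ofReal (r ^ (N/q) * (q/N))) ^ (1/q)) ^ p
        = D^(p-1) * ENNReal.ofReal (r ^ ((N/q)*(p-1)) * (q/N)^(p-1)) := by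
      rw [← ENNReal.rpow_mul]
      have h1 : (1/q)*p = p - 1 := by rw [← hpq']; ring
      rw [h1, ENNReal.mul_rpow_of_nonneg _ _ (by linarith : (0:ℝ) ≤ p-1),
        ENNReal.ofReal_rpow_of_nonneg (by positivity) (by linarith : (0:ℝ) ≤ p-1),
        Real.mul_rpow (by positivity) (by positivity), ← Real.rpow_mul hr.le]
    have e5 : ENNReal.ofReal (r ^ (-N*p)) * ENNReal.ofReal (r ^ ((N/q)*(p-1)))
        = ENNReal.ofReal (r ^ (-N - N/q)) := by
      rw [← ENNReal.ofReal_mul (by positivity), ← Real.rpow_add hr]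
      have hexp : -N*p + N/q*(p-1) = -N - N/q := by
        linear_combination N * hpq'
      rw [hexp]
    rw [ENNReal.mul_rpow_of_nonneg _ _ hp0.le, ENNReal.mul_rpow_of_nonneg _ _ hp0.le,
      e1, e2, e3, ENNReal.ofReal_mul (by positivity), hKdef, ← e5]
    ring
  -- Step B : integrate
  have stepB : ∫⁻ x : E, ((volume (ball (0:E) ‖x‖))⁻¹ * ∫⁻ y in closedBall (0:E) ‖x‖, f y) ^ p
      ≤ ∫⁻ x : E, K * ENNReal.ofReal (‖x‖ ^ (-N - N/q)) * A x := by
    refine lintegral_mono_ae ?_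
    filter_upwards [compl_mem_ae_iff.2 (measure_singleton (0:E))] with x hx
    exact stepA x hx
  refine stepB.trans (le_of_eq ?_)
  -- Step C : compute the RHS by Tonelli
  set F : E → E → ℝ≥0∞ := fun x y => K * ENNReal.ofReal (‖x‖ ^ (-N - N/q)) *
    (if ‖y‖ ≤ ‖x‖ then f y ^ p * ENNReal.ofReal (‖y‖ ^ (N/q)) else 0) with hFdef
  have hFm : Measurable (Function.uncurry F) := by
    rw [hFdef]
    refine Measurable.mul (Measurable.mul measurable_const ?_) ?_
    · fun_prop
    · refine Measurable.ite (measurableSet_le ?_ ?_) (by fun_prop) measurable_const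
      · exact measurable_snd.norm
      · exact measurable_fst.norm
  have hFA : ∀ x : E, K * ENNReal.ofReal (‖x‖ ^ (-N - N/q)) * A x = ∫⁻ y : E, F x y := by
    intro x
    rw [hAdef]
    simp only
    rw [← lintegral_indicator measurableSet_closedBall, ← lintegral_const_mul _
      (Measurable.indicator (by fun_prop) measurableSet_closedBall)]
    refine lintegral_congr fun y => ?_
    rw [hFdef]
    simp only [Set.indicator]
    congr 1
    by_cases h : ‖y‖ ≤ ‖x‖ <;> simp [h, mem_closedBall_zero_iff]
  have hswap : ∫⁻ x : E, ∫⁻ y : E, F x y = ∫⁻ y : E, ∫⁻ x : E, F x y :=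
    lintegral_lintegral_swap hFm.aemeasurable
  have hinner : ∀ y : E, y ≠ 0 →
      ∫⁻ x : E, F x y = K * D * ENNReal.ofReal (q/N) * f y ^ p := by
    intro y hy
    have hy0 : 0 < ‖y‖ := norm_pos_iff.2 hy
    have hce : (-N - N/q) < -N := by
      have : 0 < N/q := by positivity
      linarith
    have hrad := ext_rpow_int hn (c := -N - N/q) (by rw [← hNdef]; exact hce) hy0
    have hptw : ∀ x : E, F x y
        = (K * (f y ^ p * ENNReal.ofReal (‖y‖ ^ (N/q)))) *
            (Ici ‖y‖).indicator (fun s => ENNReal.ofReal (s ^ (-N - N/q))) ‖x‖ := by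
      intro x
      rw [hFdef]
      simp only [Set.indicator, mem_Ici]
      by_cases h : ‖y‖ ≤ ‖x‖ <;> simp [h] <;> ring
    have hindm : Measurable fun x : E =>
        (Ici ‖y‖).indicator (fun s => ENNReal.ofReal (s ^ (-N - N/q))) ‖x‖ :=
      (Measurable.indicator (by fun_prop) measurableSet_Ici).comp measurable_norm
    rw [lintegral_congr hptw, lintegral_const_mul _ hindm, hrad]
    have hNe : N + (-N - N/q) = -(N/q) := by ring
    rw [hNe]
    have hval : ENNReal.ofReal (‖y‖ ^ (-(N/q)) / (-(-(N/q))))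
        = ENNReal.ofReal (‖y‖ ^ (-(N/q))) * ENNReal.ofReal (q/N) := by
      rw [neg_neg, div_eq_mul_inv, inv_div, ENNReal.ofReal_mul (by positivity)]
    rw [hval]
    have hcancel : ENNReal.ofReal (‖y‖ ^ (N/q)) * ENNReal.ofReal (‖y‖ ^ (-(N/q))) = 1 := by
      rw [← ENNReal.ofReal_mul (by positivity), ← Real.rpow_add hy0]
      simp
    calc K * (f y ^ p * ENNReal.ofReal (‖y‖ ^ (N/q))) *
          ((n:ℝ≥0∞) * ν * (ENNReal.ofReal (‖y‖ ^ (-(N/q))) * ENNReal.ofReal (q/N)))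
        = K * ((n:ℝ≥0∞) * ν) * ENNReal.ofReal (q/N) * f y ^ p *
            (ENNReal.ofReal (‖y‖ ^ (N/q)) * ENNReal.ofReal (‖y‖ ^ (-(N/q)))) := by ring
      _ = K * D * ENNReal.ofReal (q/N) * f y ^ p := by
          rw [hcancel, mul_one, hDdef]
  have hconst : K * D * ENNReal.ofReal (q/N) = ENNReal.ofReal q ^ p := by
    rw [hKdef]
    have h1 : D^(p-1) * D = D^p := by
      nth_rewrite 2 [← ENNReal.rpow_one D]
      rw [← ENNReal.rpow_add _ _ hD0 hDt]
      norm_num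
    have h2 : ENNReal.ofReal ((q/N)^(p-1)) * ENNReal.ofReal (q/N)
        = ENNReal.ofReal ((q/N)^p) := by
      nth_rewrite 2 [← Real.rpow_one (q/N)]
      rw [← ENNReal.ofReal_mul (by positivity), ← Real.rpow_add (by positivity)]
      norm_num
    calc (ν⁻¹)^p * D^(p-1) * ENNReal.ofReal ((q/N)^(p-1)) * D * ENNReal.ofReal (q/N)
        = (ν⁻¹)^p * (D^(p-1) * D) * (ENNReal.ofReal ((q/N)^(p-1)) * ENNReal.ofReal (q/N)) := by
          ring
      _ = (ν⁻¹)^p * D^p * ENNReal.ofReal ((q/N)^p) := by rw [h1, h2]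
      _ = ((ν^p)⁻¹ * ν^p) * (n:ℝ≥0∞)^p * ENNReal.ofReal ((q/N)^p) := by
          rw [ENNReal.inv_rpow, hDdef, ENNReal.mul_rpow_of_nonneg _ _ hp0.le]
          ring
      _ = (n:ℝ≥0∞)^p * ENNReal.ofReal ((q/N)^p) := by
          rw [ENNReal.inv_mul_cancel (by simp [ENNReal.rpow_eq_zero_iff, hν0, hνt, hp0,
            hp0.not_gt]) (by simp [ENNReal.rpow_eq_top_iff, hν0, hνt, hp0, hp0.not_gt]),
            one_mul]
      _ = ENNReal.ofReal q ^ p := by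
          rw [← ENNReal.ofReal_natCast n, ENNReal.ofReal_rpow_of_nonneg hN.le hp0.le,
            ← ENNReal.ofReal_mul (by positivity), ← Real.mul_rpow hN.le (by positivity),
            mul_div_cancel₀ q hN.ne', ENNReal.ofReal_rpow_of_nonneg hq0.le hp0.le]
  calc ∫⁻ x : E, K * ENNReal.ofReal (‖x‖ ^ (-N - N/q)) * A x
      = ∫⁻ x : E, ∫⁻ y : E, F x y := lintegral_congr hFA
    _ = ∫⁻ y : E, ∫⁻ x : E, F x y := hswap
    _ = ∫⁻ y : E, ENNReal.ofReal q ^ p * f y ^ p := by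
        refine lintegral_congr_ae ?_
        filter_upwards [compl_mem_ae_iff.2 (measure_singleton (0:E))] with y hy
        rw [hinner y hy, hconst]
    _ = ENNReal.ofReal q ^ p * ∫⁻ y : E, f y ^ p := lintegral_const_mul _ (by fun_prop)

lemma int_inv {A B : ℝ} (hA : 0 < A) (hAB : A ≤ B) :
    ∫ s in A..B, s ^ ((-1):ℝ) = Real.log (B/A) := by
  have h0 : (0:ℝ) ∉ Set.uIcc A B := by
    rw [Set.uIcc_of_le hAB]
    intro h
    exact absurd h.1 (by linarith)
  rw [intervalIntegral.integral_congr
    (g := fun s => 1/s) (fun s hs => by simp [Real.rpow_neg_one]),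
    integral_one_div h0]

lemma hardy_sharp (hn : 1 ≤ n) {p : ℝ} (hp : 1 < p) (C : ℝ≥0∞)
    (hC : ∀ f : E → ℝ≥0∞, Measurable f →
      (∫⁻ y : E, (f y) ^ p) ^ (1 / p) < ⊤ →
      (∫⁻ x : E, ((volume (ball (0 : E) ‖x‖))⁻¹ *
          ∫⁻ y in closedBall (0 : E) ‖x‖, f y) ^ p) ^ (1 / p)
        ≤ C * (∫⁻ y : E, (f y) ^ p) ^ (1 / p)) :
    ENNReal.ofReal (p / (p - 1)) ≤ C := by
  haveI := nontrivE hn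
  by_cases hCt : C = ⊤
  · exact hCt ▸ le_top
  set q : ℝ := p/(p-1) with hqdef
  have hpq : p.HolderConjugate q := Real.HolderConjugate.conjExponent hp
  have hp0 : (0:ℝ) < p := hpq.pos
  have hq0 : (0:ℝ) < q := hpq.symm.pos
  have hsum : p + q = p * q := by
    have h := hpq.inv_add_inv_eq_one
    field_simp at h
    linarith
  have hN : (0:ℝ) < n := by exact_mod_cast hn
  set N : ℝ := (n:ℝ) with hNdef
  have hν0 : ν ≠ 0 := nu_pos.ne'
  have hνt : ν ≠ ⊤ := nu_lt_top.ne
  set D : ℝ≥0∞ := (n:ℝ≥0∞) * ν with hDdef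
  have hD0 : D ≠ 0 := mul_ne_zero (Nat.cast_ne_zero.2 (by omega)) hν0
  have hDt : D ≠ ⊤ := ENNReal.mul_ne_top (ENNReal.natCast_ne_top n) hνt
  set d : ℝ := D.toReal with hddef
  have hd : 0 < d := ENNReal.toReal_pos hD0 hDt
  have hDofReal : D = ENNReal.ofReal d := (ENNReal.ofReal_toReal hDt).symm
  clear_value q
  have hNpq : N - 1 - N/p = N/q - 1 := by
    linear_combination (-N) * hpq.inv_add_inv_eq_one
  have key : ∀ A R : ℝ, 1 < A → A < R →
      q * (1 - A ^ (-(N/q))) * (d * Real.log (R/A)) ^ (1/p)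
        ≤ C.toReal * (d * Real.log R) ^ (1/p) := by
    intro A R hA hAR
    have hA0 : (0:ℝ) < A := by linarith
    have hR1 : (1:ℝ) < R := by linarith
    have hR0 : (0:ℝ) < R := by linarith
    set m : ℝ := q * (1 - A ^ (-(N/q))) with hmdef
    have hm0 : 0 ≤ m := by
      have h1 : A ^ (-(N/q)) ≤ 1 :=
        Real.rpow_le_one_of_one_le_of_nonpos hA.le (neg_nonpos.2 (by positivity))
      have h2 : 0 ≤ 1 - A ^ (-(N/q)) := by linarith
      rw [hmdef]
      exact mul_nonneg hq0.le h2
    set f : E → ℝ≥0∞ :=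
      fun y => (Ioc 1 R).indicator (fun s => ENNReal.ofReal (s ^ (-(N/p)))) ‖y‖ with hfdef
    have hfm : Measurable f :=
      Measurable.comp (Measurable.indicator (by fun_prop) measurableSet_Ioc) measurable_norm
    have hfp : ∀ y : E, f y ^ p
        = (Ioc 1 R).indicator (fun s => ENNReal.ofReal (s ^ (-N))) ‖y‖ := by
      intro y
      rw [hfdef]
      simp only [Set.indicator]
      by_cases h : ‖y‖ ∈ Ioc 1 R
      · have h0 : (0:ℝ) < ‖y‖ := lt_trans one_pos h.1
        rw [if_pos h, if_pos h,
          ENNReal.ofReal_rpow_of_nonneg (Real.rpow_nonneg h0.le _) hp0.le,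
          ← Real.rpow_mul h0.le]
        congr 2
        field_simp
      · rw [if_neg h, if_neg h, ENNReal.zero_rpow_of_pos hp0]
    have hnorm : ∫⁻ y : E, f y ^ p = D * ENNReal.ofReal (Real.log R) := by
      rw [lintegral_congr hfp, annulus_rpow_int hn (-N) one_pos hR1.le]
      have he : (N:ℝ) - 1 + -N = -1 := by ring
      rw [← hNdef, he, int_inv one_pos hR1.le, div_one, hDdef]
    have hnorm_fin : (∫⁻ y : E, f y ^ p) ^ (1/p) < ⊤ := by
      rw [hnorm]
      exact ENNReal.rpow_lt_top_of_nonneg (by positivity)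
        (ENNReal.mul_ne_top hDt ENNReal.ofReal_ne_top)
    have hGlow : ∀ x : E, ‖x‖ ∈ Ioc A R →
        ENNReal.ofReal (m^p) * ENNReal.ofReal (‖x‖ ^ (-N))
          ≤ ((volume (ball (0:E) ‖x‖))⁻¹ * ∫⁻ y in closedBall (0:E) ‖x‖, f y) ^ p := by
      intro x hx
      have hr1 : 1 < ‖x‖ := lt_trans hA hx.1
      have hr0 : (0:ℝ) < ‖x‖ := by linarith
      have hrR : ‖x‖ ≤ R := hx.2
      set r : ℝ := ‖x‖ with hrdef
      have hball : volume (ball (0:E) r) = ENNReal.ofReal (r ^ N) * ν := by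
        rw [Measure.addHaar_ball volume 0 hr0.le]
        congr 2
        rw [finrank_euclideanSpace, Fintype.card_fin, hNdef, Real.rpow_natCast]
      have hlow1 : D * ENNReal.ofReal ((r^(N/q) - 1) * (q/N))
          ≤ ∫⁻ y in closedBall (0:E) r, f y := by
        have hann := annulus_rpow_int (n := n) hn (-(N/p)) one_pos hr1.le
        have hval : ∫ s in (1:ℝ)..r, s ^ ((n:ℝ) - 1 + -(N/p)) = (r^(N/q) - 1) * (q/N) := by
          have hNq : (0:ℝ) < N/q := by positivity
          have he : (n:ℝ) - 1 + -(N/p) = N/q - 1 := by rw [← hNdef, ← hNpq]; ring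
          rw [he, integral_rpow (Or.inl (by linarith))]
          rw [sub_add_cancel, Real.one_rpow, div_eq_mul_inv, inv_div]
        have hsplit : ∫⁻ y : E, (Ioc 1 r).indicator
              (fun s => ENNReal.ofReal (s ^ (-(N/p)))) ‖y‖
            ≤ ∫⁻ y in closedBall (0:E) r, f y := by
          rw [← lintegral_add_compl (μ := volume)
            (fun y : E => (Ioc 1 r).indicator (fun s => ENNReal.ofReal (s ^ (-(N/p)))) ‖y‖)
            (measurableSet_closedBall (x := (0:E)) (ε := r))]
          have hz : ∫⁻ y : E in (closedBall (0:E) r)ᶜ,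
              (Ioc 1 r).indicator (fun s => ENNReal.ofReal (s ^ (-(N/p)))) ‖y‖ = 0 := by
            rw [setLIntegral_congr_fun (measurableSet_closedBall).compl
              (fun y hy => ?_), lintegral_zero]
            have hyr : r < ‖y‖ := by
              simp only [mem_compl_iff, mem_closedBall_zero_iff, not_le] at hy
              exact hy
            simp [Set.indicator, Set.mem_Ioc, hyr.not_ge]
          rw [hz, add_zero]
          refine setLIntegral_mono' measurableSet_closedBall fun y hy => ?_
          rw [hfdef]
          simp only [Set.indicator, Set.mem_Ioc]
          by_cases h : 1 < ‖y‖ ∧ ‖y‖ ≤ r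
          · rw [if_pos h, if_pos ⟨h.1, h.2.trans hrR⟩]
          · rw [if_neg h]
            exact zero_le
        calc D * ENNReal.ofReal ((r^(N/q) - 1) * (q/N))
            = ∫⁻ y : E, (Ioc 1 r).indicator
                (fun s => ENNReal.ofReal (s ^ (-(N/p)))) ‖y‖ := by
              rw [hann, hval, hDdef]
          _ ≤ _ := hsplit
      have hcomb : ENNReal.ofReal (q * (r ^ (-(N/p)) - r ^ (-N)))
          ≤ (volume (ball (0:E) r))⁻¹ * ∫⁻ y in closedBall (0:E) r, f y := by
        rw [hball]
        have hrr : r ^ (N/q) * r ^ (-N) = r ^ (-(N/p)) := by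
          rw [← Real.rpow_add hr0]
          congr 1
          linear_combination N * hpq.inv_add_inv_eq_one
        have heq : (ENNReal.ofReal (r ^ N) * ν)⁻¹ * (D * ENNReal.ofReal ((r^(N/q) - 1) * (q/N)))
            = ENNReal.ofReal (q * (r ^ (-(N/p)) - r ^ (-N))) := by
          have hr0' : ENNReal.ofReal (r ^ N) ≠ 0 := by
            simp only [ne_eq, ENNReal.ofReal_eq_zero, not_le]
            positivity
          rw [ENNReal.mul_inv (Or.inl hr0') (Or.inl ENNReal.ofReal_ne_top), hDdef]
          calc (ENNReal.ofReal (r ^ N))⁻¹ * ν⁻¹ *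
                ((n:ℝ≥0∞) * ν * ENNReal.ofReal ((r^(N/q) - 1) * (q/N)))
              = (ν⁻¹ * ν) * ((ENNReal.ofReal (r ^ N))⁻¹ * (n:ℝ≥0∞) *
                  ENNReal.ofReal ((r^(N/q) - 1) * (q/N))) := by ring
            _ = (ENNReal.ofReal (r ^ N))⁻¹ * (n:ℝ≥0∞) *
                  ENNReal.ofReal ((r^(N/q) - 1) * (q/N)) := by
                rw [ENNReal.inv_mul_cancel hν0 hνt, one_mul]
            _ = ENNReal.ofReal (r ^ (-N)) * ENNReal.ofReal N *
                  ENNReal.ofReal ((r^(N/q) - 1) * (q/N)) := by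
                rw [← ENNReal.ofReal_inv_of_pos (by positivity), ← Real.rpow_neg hr0.le,
                  ← ENNReal.ofReal_natCast n]
            _ = ENNReal.ofReal (r ^ (-N) * N * ((r^(N/q) - 1) * (q/N))) := by
                rw [← ENNReal.ofReal_mul (by positivity), ← ENNReal.ofReal_mul (by positivity)]
            _ = ENNReal.ofReal (q * (r ^ (-(N/p)) - r ^ (-N))) := by
                congr 1
                have hexp : r ^ (-N) * N * ((r^(N/q) - 1) * (q/N))
                    = q * (r ^ (N/q) * r ^ (-N) - r ^ (-N)) := by
                  field_simp
                rw [hexp, hrr]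
        rw [← heq]
        exact mul_le_mul_right hlow1 _
      have hmono2 : ENNReal.ofReal (m * r ^ (-(N/p)))
          ≤ ENNReal.ofReal (q * (r ^ (-(N/p)) - r ^ (-N))) := by
        apply ENNReal.ofReal_le_ofReal
        have hsplit2 : r ^ (-N) = r ^ (-(N/p)) * r ^ (-(N/q)) := by
          rw [← Real.rpow_add hr0]
          congr 1
          linear_combination N * hpq.inv_add_inv_eq_one
        have hmono3 : r ^ (-(N/q)) ≤ A ^ (-(N/q)) := by
          rw [Real.rpow_neg hr0.le, Real.rpow_neg hA0.le]
          apply inv_anti₀ (by positivity)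
          exact Real.rpow_le_rpow hA0.le hx.1.le (by positivity)
        have hrp : (0:ℝ) < r ^ (-(N/p)) := by positivity
        rw [hmdef, hsplit2]
        nlinarith [mul_le_mul_of_nonneg_left hmono3 (mul_nonneg hq0.le hrp.le)]
      have hfinal : ENNReal.ofReal (m * r ^ (-(N/p))) ^ p
          ≤ ((volume (ball (0:E) r))⁻¹ * ∫⁻ y in closedBall (0:E) r, f y) ^ p :=
        ENNReal.rpow_le_rpow (hmono2.trans hcomb) hp0.le
      refine le_trans (le_of_eq ?_) hfinal
      rw [ENNReal.ofReal_rpow_of_nonneg (by positivity) hp0.le,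
        Real.mul_rpow hm0 (by positivity), ← Real.rpow_mul hr0.le,
        ENNReal.ofReal_mul (by positivity)]
      congr 3
      field_simp
    have hIlow : ENNReal.ofReal (m^p) * (D * ENNReal.ofReal (Real.log (R/A)))
        ≤ ∫⁻ x : E, ((volume (ball (0:E) ‖x‖))⁻¹ *
            ∫⁻ y in closedBall (0:E) ‖x‖, f y) ^ p := by
      have hlow : ∫⁻ x : E, ENNReal.ofReal (m^p) *
            (Ioc A R).indicator (fun s => ENNReal.ofReal (s ^ (-N))) ‖x‖
          ≤ ∫⁻ x : E, ((volume (ball (0:E) ‖x‖))⁻¹ *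
              ∫⁻ y in closedBall (0:E) ‖x‖, f y) ^ p := by
        refine lintegral_mono fun x => ?_
        by_cases h : ‖x‖ ∈ Ioc A R
        · rw [Set.indicator_of_mem h]
          exact hGlow x h
        · rw [Set.indicator_of_notMem h, mul_zero]
          exact zero_le
      have hconst : ∫⁻ x : E, ENNReal.ofReal (m^p) *
            (Ioc A R).indicator (fun s => ENNReal.ofReal (s ^ (-N))) ‖x‖
          = ENNReal.ofReal (m^p) * (D * ENNReal.ofReal (Real.log (R/A))) := by
        have hm2 : Measurable fun x : E =>
            (Ioc A R).indicator (fun s => ENNReal.ofReal (s ^ (-N))) ‖x‖ :=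
          (Measurable.indicator (by fun_prop) measurableSet_Ioc).comp measurable_norm
        rw [lintegral_const_mul _ hm2,
          annulus_rpow_int hn (-N) (by linarith : (0:ℝ) < A) hAR.le]
        have he : (N:ℝ) - 1 + -N = -1 := by ring
        rw [← hNdef, he, int_inv (by linarith) hAR.le, hDdef]
      rw [← hconst]
      exact hlow
    have happ := hC f hfm hnorm_fin
    rw [hnorm] at happ
    have hchain : (ENNReal.ofReal (m^p) * (D * ENNReal.ofReal (Real.log (R/A)))) ^ (1/p)
        ≤ C * (D * ENNReal.ofReal (Real.log R)) ^ (1/p) :=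
      le_trans (ENNReal.rpow_le_rpow hIlow (by positivity)) happ
    have hlogRA : 0 ≤ Real.log (R/A) :=
      Real.log_nonneg ((one_le_div hA0).2 hAR.le)
    have hlogR : 0 ≤ Real.log R := Real.log_nonneg hR1.le
    have hLHS : (ENNReal.ofReal (m^p) * (D * ENNReal.ofReal (Real.log (R/A)))) ^ (1/p)
        = ENNReal.ofReal (m * (d * Real.log (R/A)) ^ (1/p)) := by
      rw [hDofReal, ← ENNReal.ofReal_mul hd.le, ← ENNReal.ofReal_mul (by positivity),
        ENNReal.ofReal_rpow_of_nonneg (by positivity) (by positivity),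
        Real.mul_rpow (by positivity) (by positivity),
        ← Real.rpow_mul hm0, mul_one_div, div_self hp0.ne', Real.rpow_one]
    have hRHS : C * (D * ENNReal.ofReal (Real.log R)) ^ (1/p)
        = C * ENNReal.ofReal ((d * Real.log R) ^ (1/p)) := by
      rw [hDofReal, ← ENNReal.ofReal_mul hd.le,
        ENNReal.ofReal_rpow_of_nonneg (by positivity) (by positivity)]
    rw [hLHS, hRHS] at hchain
    have hfin := ENNReal.toReal_mono (ENNReal.mul_ne_top hCt ENNReal.ofReal_ne_top) hchain
    rw [ENNReal.toReal_ofReal (by positivity), ENNReal.toReal_mul,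
      ENNReal.toReal_ofReal (by positivity)] at hfin
    exact hfin
  -- limits
  have hqA : ∀ A : ℝ, 1 < A → q * (1 - A ^ (-(N/q))) ≤ C.toReal := by
    intro A hA
    have hA0 : (0:ℝ) < A := by linarith
    set a : ℝ := Real.log A with hadef
    have ha0 : 0 < a := Real.log_pos hA
    have hk : ∀ k : ℕ, q * (1 - A ^ (-(N/q)))
        ≤ C.toReal * ((a + ((k:ℝ)+1))/((k:ℝ)+1)) ^ (1/p) := by
      intro k
      have hexp1 : (1:ℝ) < Real.exp ((k:ℝ)+1) := by
        rw [← Real.exp_zero]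
        exact Real.exp_lt_exp.2 (by positivity)
      have hAR : A < A * Real.exp ((k:ℝ)+1) := by nlinarith
      have hkey := key A (A * Real.exp ((k:ℝ)+1)) hA hAR
      have hlog1 : Real.log (A * Real.exp ((k:ℝ)+1) / A) = (k:ℝ)+1 := by
        rw [mul_comm, mul_div_assoc, div_self hA0.ne', mul_one, Real.log_exp]
      have hlog2 : Real.log (A * Real.exp ((k:ℝ)+1)) = a + ((k:ℝ)+1) := by
        rw [Real.log_mul hA0.ne' (by positivity), Real.log_exp, hadef]
      rw [hlog1, hlog2] at hkey
      have hpos : (0:ℝ) < (d * ((k:ℝ)+1)) ^ (1/p) := by positivity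
      rw [← le_div_iff₀ hpos] at hkey
      refine hkey.trans (le_of_eq ?_)
      rw [mul_div_assoc, ← Real.div_rpow (by positivity) (by positivity),
        mul_div_mul_left _ _ hd.ne']
    have hten : Tendsto (fun k : ℕ => C.toReal * ((a + ((k:ℝ)+1))/((k:ℝ)+1)) ^ (1/p))
        atTop (nhds (C.toReal)) := by
      have h1 : Tendsto (fun k : ℕ => (a + ((k:ℝ)+1))/((k:ℝ)+1)) atTop (nhds 1) := by
        have h2 : ∀ k : ℕ, (a + ((k:ℝ)+1))/((k:ℝ)+1) = a/((k:ℝ)+1) + 1 := by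
          intro k
          have hk0 : ((k:ℝ)+1) ≠ 0 := by positivity
          field_simp
        simp_rw [h2]
        have h3 : Tendsto (fun k : ℕ => a/((k:ℝ)+1)) atTop (nhds 0) := by
          have h4 := (tendsto_const_div_atTop_nhds_zero_nat a).comp (tendsto_add_atTop_nat 1)
          simpa [Function.comp_def, Nat.cast_add, Nat.cast_one] using h4
        simpa using h3.add tendsto_const_nhds
      have h5 := (h1.rpow_const (Or.inr (by positivity : (0:ℝ) ≤ 1/p))).const_mul C.toReal
      simpa [Real.one_rpow] using h5
    exact ge_of_tendsto hten (Filter.Eventually.of_forall hk)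
  have hfin2 : q ≤ C.toReal := by
    have h1 : Tendsto (fun A : ℝ => q * (1 - A ^ (-(N/q)))) atTop (nhds (q * (1 - 0))) :=
      (tendsto_const_nhds.sub (tendsto_rpow_neg_atTop (by positivity))).const_mul q
    rw [sub_zero, mul_one] at h1
    exact le_of_tendsto h1 ((eventually_gt_atTop 1).mono hqA)
  calc ENNReal.ofReal q ≤ ENNReal.ofReal (C.toReal) := ENNReal.ofReal_le_ofReal hfin2
    _ = C := ENNReal.ofReal_toReal hCt

end Euclidean

/-- The `n`-dimensional spherical Hardy operator
`𝓗f(x) = (1/(ν_n |x|ⁿ)) ∫_{|y| ≤ |x|} f(y) dy` (where `ν_n |x|ⁿ` is the volume of the ball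
of radius `|x|`) satisfies `‖𝓗f‖_{L^p} ≤ (p/(p-1)) ‖f‖_{L^p}` for nonnegative measurable `f`,
and the constant `p/(p-1)` is exactly its operator norm, independently of the dimension. -/
theorem spherical_hardy_norm (n : ℕ) (hn : 1 ≤ n) (p : ℝ) (hp : 1 < p) :
    (∀ f : EuclideanSpace ℝ (Fin n) → ℝ≥0∞, Measurable f →
      (∫⁻ x : EuclideanSpace ℝ (Fin n),
          ((volume (ball (0 : EuclideanSpace ℝ (Fin n)) ‖x‖))⁻¹ *
            ∫⁻ y in closedBall (0 : EuclideanSpace ℝ (Fin n)) ‖x‖, f y) ^ p) ^ (1 / p)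
        ≤ ENNReal.ofReal (p / (p - 1)) *
          (∫⁻ y : EuclideanSpace ℝ (Fin n), (f y) ^ p) ^ (1 / p)) ∧
    (∀ C : ℝ≥0∞,
      (∀ f : EuclideanSpace ℝ (Fin n) → ℝ≥0∞, Measurable f →
        (∫⁻ y : EuclideanSpace ℝ (Fin n), (f y) ^ p) ^ (1 / p) < ⊤ →
        (∫⁻ x : EuclideanSpace ℝ (Fin n),
            ((volume (ball (0 : EuclideanSpace ℝ (Fin n)) ‖x‖))⁻¹ *
              ∫⁻ y in closedBall (0 : EuclideanSpace ℝ (Fin n)) ‖x‖, f y) ^ p) ^ (1 / p)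
          ≤ C * (∫⁻ y : EuclideanSpace ℝ (Fin n), (f y) ^ p) ^ (1 / p)) →
      ENNReal.ofReal (p / (p - 1)) ≤ C) := by
  have hp0 : (0:ℝ) < p := by linarith
  constructor
  · intro f hf
    have h := hardy_upper hn hp f hf
    have h2 := ENNReal.rpow_le_rpow h (by positivity : (0:ℝ) ≤ 1/p)
    rw [ENNReal.mul_rpow_of_nonneg _ _ (by positivity : (0:ℝ) ≤ 1/p), ← ENNReal.rpow_mul,
      mul_one_div, div_self hp0.ne', ENNReal.rpow_one] at h2
    exact h2
  · intro C hC
    exact hardy_sharp hn hp C hC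
end

section
/- Let 0 < β < n. The fractional Hardy operator H_β f(x) = |B(0,|x|)|^{β/n - 1} ∫_{|y| ≤ |x|} f(y) dy maps L¹(ℝⁿ) to weak L^{n/(n-β)}(ℝⁿ) with operator norm exactly 1; that is, for all f ∈ L¹(ℝⁿ) and λ > 0, |{x : |H_β f(x)| > λ}| ≤ (‖f‖_{L¹}/λ)^{n/(n-β)}, and this bound is sharp. -/
open MeasureTheory Set ENNReal Metric

/-- The fractional Hardy operator `H_β f(x) = |B(0,|x|)|^{β/n - 1} ∫_{|y|≤|x|} f(y) dy`. -/
noncomputable def fracHardy (n : ℕ) (β : ℝ) (f : EuclideanSpace ℝ (Fin n) → ℝ)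
    (x : EuclideanSpace ℝ (Fin n)) : ℝ :=
  (volume (ball (0 : EuclideanSpace ℝ (Fin n)) ‖x‖)).toReal ^ (β / n - 1) *
    ∫ y in closedBall (0 : EuclideanSpace ℝ (Fin n)) ‖x‖, f y

/-- The weak `L^{n/(n-β)}` quasinorm `sup_{λ>0} λ |{|g| > λ}|^{(n-β)/n}`. -/
noncomputable def weakNorm (n : ℕ) (β : ℝ) (g : EuclideanSpace ℝ (Fin n) → ℝ) : ℝ≥0∞ :=
  ⨆ (lam : ℝ) (_ : 0 < lam),
    ENNReal.ofReal lam * (volume {x : EuclideanSpace ℝ (Fin n) | lam < |g x|}) ^ ((n - β) / n)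

/-- The volume of the unit ball, as a real number. -/
noncomputable def unitVol (n : ℕ) : ℝ :=
  (volume (ball (0 : EuclideanSpace ℝ (Fin n)) 1)).toReal

lemma unitVol_pos (n : ℕ) [Nonempty (Fin n)] : 0 < unitVol n :=
  ENNReal.toReal_pos (measure_ball_pos _ _ one_pos).ne' measure_ball_lt_top.ne

lemma volume_ball_eq (n : ℕ) [Nonempty (Fin n)] (r : ℝ) (hr : 0 ≤ r) :
    volume (ball (0 : EuclideanSpace ℝ (Fin n)) r)
      = ENNReal.ofReal (unitVol n * r ^ (n : ℝ)) := by
  rw [Measure.addHaar_ball _ _ hr, finrank_euclideanSpace_fin,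
    ENNReal.ofReal_mul (unitVol_pos n).le, ← Real.rpow_natCast r n]
  rw [show ENNReal.ofReal (unitVol n) = volume (ball (0 : EuclideanSpace ℝ (Fin n)) 1) from
    ENNReal.ofReal_toReal measure_ball_lt_top.ne]
  ring

lemma volume_closedBall_eq (n : ℕ) [Nonempty (Fin n)] (r : ℝ) (hr : 0 ≤ r) :
    volume (closedBall (0 : EuclideanSpace ℝ (Fin n)) r)
      = ENNReal.ofReal (unitVol n * r ^ (n : ℝ)) := by
  rw [Measure.addHaar_closedBall _ _ hr, finrank_euclideanSpace_fin,
    ENNReal.ofReal_mul (unitVol_pos n).le, ← Real.rpow_natCast r n]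
  rw [show ENNReal.ofReal (unitVol n) = volume (ball (0 : EuclideanSpace ℝ (Fin n)) 1) from
    ENNReal.ofReal_toReal measure_ball_lt_top.ne]
  ring

lemma toReal_volume_ball (n : ℕ) [Nonempty (Fin n)] (r : ℝ) (hr : 0 ≤ r) :
    (volume (ball (0 : EuclideanSpace ℝ (Fin n)) r)).toReal = unitVol n * r ^ (n : ℝ) := by
  rw [volume_ball_eq n r hr, ENNReal.toReal_ofReal]
  exact mul_nonneg ENNReal.toReal_nonneg (Real.rpow_nonneg hr _)

/-- Pointwise bound for the fractional Hardy operator. -/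
lemma abs_fracHardy_le (n : ℕ) (β : ℝ) (f : EuclideanSpace ℝ (Fin n) → ℝ)
    (hf : Integrable f) (x : EuclideanSpace ℝ (Fin n)) :
    |fracHardy n β f x|
      ≤ (volume (ball (0 : EuclideanSpace ℝ (Fin n)) ‖x‖)).toReal ^ (β / n - 1)
        * ∫ y, |f y| := by
  rw [fracHardy, abs_mul, abs_of_nonneg (Real.rpow_nonneg ENNReal.toReal_nonneg _)]
  refine mul_le_mul_of_nonneg_left ?_ (Real.rpow_nonneg ENNReal.toReal_nonneg _)
  calc |∫ y in closedBall (0 : EuclideanSpace ℝ (Fin n)) ‖x‖, f y|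
      ≤ ∫ y in closedBall (0 : EuclideanSpace ℝ (Fin n)) ‖x‖, |f y| := by
        simpa [Real.norm_eq_abs] using
          norm_integral_le_integral_norm
            (μ := volume.restrict (closedBall (0 : EuclideanSpace ℝ (Fin n)) ‖x‖)) f
    _ ≤ ∫ y, |f y| :=
        setIntegral_le_integral hf.abs (Filter.Eventually.of_forall fun y => abs_nonneg _)

/-- For `0 < β < n`, the fractional Hardy operator maps `L¹(ℝⁿ)` to weak `L^{n/(n-β)}(ℝⁿ)`:
`|{x : |H_β f(x)| > λ}| ≤ (‖f‖₁/λ)^{n/(n-β)}` for all `λ > 0`, and the operator norm from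
`L¹` to `L^{n/(n-β),∞}` is exactly `1`. -/
theorem fracHardy_weak_type (n : ℕ) (hn : 1 ≤ n) (β : ℝ) (hβ₀ : 0 < β) (hβn : β < n) :
    (∀ f : EuclideanSpace ℝ (Fin n) → ℝ, Integrable f → ∀ lam : ℝ, 0 < lam →
      volume {x : EuclideanSpace ℝ (Fin n) | lam < |fracHardy n β f x|}
        ≤ ENNReal.ofReal ((∫ y, |f y|) / lam) ^ ((n : ℝ) / (n - β))) ∧
    (∀ C : ℝ≥0∞,
      (∀ f : EuclideanSpace ℝ (Fin n) → ℝ, Integrable f →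
        weakNorm n β (fracHardy n β f) ≤ C * ENNReal.ofReal (∫ y, |f y|)) →
      1 ≤ C) := by
  haveI : Nonempty (Fin n) := ⟨⟨0, hn⟩⟩
  have hn0 : (0:ℝ) < (n:ℝ) := by exact_mod_cast Nat.pos_of_ne_zero (by omega)
  have hnβ : (0:ℝ) < (n:ℝ) - β := by linarith
  have hq : (0:ℝ) < ((n:ℝ) - β) / n := div_pos hnβ hn0
  have hp : (0:ℝ) < (n:ℝ) / ((n:ℝ) - β) := div_pos hn0 hnβ
  have hexp : β / (n:ℝ) - 1 = -(((n:ℝ) - β) / n) := by field_simp; ring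
  have hexpne : β / (n:ℝ) - 1 ≠ 0 := by
    rw [hexp]; exact neg_ne_zero.mpr hq.ne'
  have hν : 0 < unitVol n := unitVol_pos n
  constructor
  · -- weak type (1, n/(n-β)) bound
    intro f hf lam hlam
    set I : ℝ := ∫ y, |f y| with hIdef
    have hI0 : 0 ≤ I := integral_nonneg fun y => abs_nonneg _
    rcases hI0.eq_or_lt with hI | hI
    · -- trivial case: ∫|f| = 0
      have hempty : {x : EuclideanSpace ℝ (Fin n) | lam < |fracHardy n β f x|} = ∅ := by
        rw [Set.eq_empty_iff_forall_notMem]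
        intro x hx
        have := (abs_fracHardy_le n β f hf x).trans_eq (by rw [← hIdef, ← hI, mul_zero])
        simp only [Set.mem_setOf_eq] at hx
        linarith
      rw [hempty, measure_empty]
      exact zero_le
    · set c : ℝ := (I / lam) ^ ((n:ℝ) / ((n:ℝ) - β)) with hcdef
      have hc : 0 < c := Real.rpow_pos_of_pos (div_pos hI hlam) _
      set R : ℝ := (c / unitVol n) ^ ((n:ℝ)⁻¹) with hRdef
      have hR0 : 0 ≤ R := Real.rpow_nonneg (div_nonneg hc.le hν.le) _
      have hsub : {x : EuclideanSpace ℝ (Fin n) | lam < |fracHardy n β f x|}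
          ⊆ ball (0 : EuclideanSpace ℝ (Fin n)) R := by
        intro x hx
        simp only [Set.mem_setOf_eq] at hx
        have h1 : lam <
            (volume (ball (0 : EuclideanSpace ℝ (Fin n)) ‖x‖)).toReal ^ (β / n - 1) * I :=
          lt_of_lt_of_le hx (abs_fracHardy_le n β f hf x)
        have hx0 : x ≠ 0 := by
          rintro rfl
          rw [norm_zero] at h1
          simp [Real.zero_rpow hexpne] at h1
          linarith
        have hr : 0 < ‖x‖ := norm_pos_iff.mpr hx0
        set V : ℝ := unitVol n * ‖x‖ ^ (n:ℝ) with hVdef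
        have hV : 0 < V := by positivity
        rw [toReal_volume_ball n ‖x‖ hr.le, ← hVdef] at h1
        -- from lam < V^{-(q)} * I deduce V^q < I/lam where q = (n-β)/n
        have h2 : lam * V ^ (((n:ℝ) - β) / n) < I := by
          have := mul_lt_mul_of_pos_right h1 (Real.rpow_pos_of_pos hV (((n:ℝ) - β) / n))
          calc lam * V ^ (((n:ℝ) - β) / n) < V ^ (β / ↑n - 1) * I * V ^ (((n:ℝ) - β) / n) :=
                this
            _ = I := by
                rw [hexp, Real.rpow_neg hV.le]
                field_simp
        have h3 : V ^ (((n:ℝ) - β) / n) < I / lam := (lt_div_iff₀' hlam).mpr h2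
        have h4 : V < c := by
          have := Real.rpow_lt_rpow (Real.rpow_nonneg hV.le _) h3 hp
          rwa [← Real.rpow_mul hV.le, div_mul_div_comm, mul_comm ((n:ℝ) - β),
            div_self (by positivity), Real.rpow_one] at this
        have h5 : ‖x‖ ^ (n:ℝ) < c / unitVol n := by
          rw [lt_div_iff₀' hν]; exact h4
        have h6 : ‖x‖ < R := by
          have := Real.rpow_lt_rpow (by positivity) h5 (by positivity : (0:ℝ) < (n:ℝ)⁻¹)
          rwa [← Real.rpow_mul hr.le, mul_inv_cancel₀ hn0.ne', Real.rpow_one] at this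
        exact mem_ball_zero_iff.mpr h6
      calc volume {x : EuclideanSpace ℝ (Fin n) | lam < |fracHardy n β f x|}
          ≤ volume (ball (0 : EuclideanSpace ℝ (Fin n)) R) := measure_mono hsub
        _ = ENNReal.ofReal (unitVol n * R ^ (n:ℝ)) := volume_ball_eq n R hR0
        _ = ENNReal.ofReal c := by
            rw [hRdef, ← Real.rpow_mul (by positivity), inv_mul_cancel₀ hn0.ne',
              Real.rpow_one, mul_div_cancel₀ _ hν.ne']
        _ = ENNReal.ofReal (I / lam) ^ ((n:ℝ) / ((n:ℝ) - β)) :=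
            (ENNReal.ofReal_rpow_of_nonneg (div_nonneg hI0 hlam.le) hp.le).symm
  · -- sharpness
    intro C hC
    set f : EuclideanSpace ℝ (Fin n) → ℝ :=
      (closedBall (0 : EuclideanSpace ℝ (Fin n)) 1).indicator (fun _ => (1:ℝ)) with hfdef
    have hfint : Integrable f := by
      rw [hfdef, integrable_indicator_iff measurableSet_closedBall]
      exact integrableOn_const measure_closedBall_lt_top.ne
    have hvol1 : volume (closedBall (0 : EuclideanSpace ℝ (Fin n)) 1)
        = ENNReal.ofReal (unitVol n) := by
      rw [volume_closedBall_eq n 1 zero_le_one, Real.one_rpow, mul_one]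
    have hIf : ∫ y, |f y| = unitVol n := by
      have habs : ∀ y, |f y| = f y := fun y =>
        abs_of_nonneg (Set.indicator_nonneg (fun _ _ => zero_le_one) y)
      simp only [habs]; simp only [hfdef]
      rw [integral_indicator_const (1:ℝ) measurableSet_closedBall, measureReal_def, hvol1,
        ENNReal.toReal_ofReal hν.le, smul_eq_mul, mul_one]
    have hH : ∀ x : EuclideanSpace ℝ (Fin n), 1 ≤ ‖x‖ →
        fracHardy n β f x = (unitVol n * ‖x‖ ^ (n:ℝ)) ^ (β / n - 1) * unitVol n := by
      intro x hx1
      have hr0 : (0:ℝ) ≤ ‖x‖ := norm_nonneg x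
      rw [fracHardy, toReal_volume_ball n ‖x‖ hr0, hfdef]
      congr 1
      rw [setIntegral_indicator measurableSet_closedBall,
        Set.inter_eq_self_of_subset_right (closedBall_subset_closedBall hx1),
        setIntegral_const, measureReal_def, hvol1, ENNReal.toReal_ofReal hν.le, smul_eq_mul, mul_one]
    -- key estimate for each R > 1
    have key : ∀ R : ℝ, 1 < R →
        ENNReal.ofReal ((1 - R ^ (-(n:ℝ))) ^ (((n:ℝ) - β) / n)) ≤ C := by
      intro R hR
      have hR0 : (0:ℝ) < R := lt_trans one_pos hR
      have hRn : (1:ℝ) < R ^ (n:ℝ) := Real.one_lt_rpow_iff_of_pos hR0 |>.mpr (Or.inl ⟨hR, hn0⟩)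
      set lam : ℝ := (unitVol n * R ^ (n:ℝ)) ^ (β / ↑n - 1) * unitVol n with hlamdef
      have hBpos : (0:ℝ) < unitVol n * R ^ (n:ℝ) := by positivity
      have hlam : 0 < lam := mul_pos (Real.rpow_pos_of_pos hBpos _) hν
      set A : Set (EuclideanSpace ℝ (Fin n)) :=
        ball (0 : EuclideanSpace ℝ (Fin n)) R \ ball (0 : EuclideanSpace ℝ (Fin n)) 1 with hAdef
      have hsub : A ⊆ {x : EuclideanSpace ℝ (Fin n) | lam < |fracHardy n β f x|} := by
        rintro x ⟨hxR, hx1⟩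
        have hx1' : 1 ≤ ‖x‖ := not_lt.mp (fun h => hx1 (mem_ball_zero_iff.mpr h))
        have hxR' : ‖x‖ < R := mem_ball_zero_iff.mp hxR
        have hrpos : (0:ℝ) < unitVol n * ‖x‖ ^ (n:ℝ) := by positivity
        have hmono : unitVol n * ‖x‖ ^ (n:ℝ) < unitVol n * R ^ (n:ℝ) :=
          mul_lt_mul_of_pos_left (Real.rpow_lt_rpow (norm_nonneg x) hxR' hn0) hν
        have hlt : (unitVol n * R ^ (n:ℝ)) ^ (β / ↑n - 1)
            < (unitVol n * ‖x‖ ^ (n:ℝ)) ^ (β / ↑n - 1) :=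
          Real.rpow_lt_rpow_of_neg hrpos hmono (by rw [hexp]; exact neg_neg_of_pos hq)
        have := hH x hx1'
        simp only [Set.mem_setOf_eq, this]
        rw [abs_of_nonneg (by positivity)]
        exact mul_lt_mul_of_pos_right hlt hν
      have hvolA : volume A = ENNReal.ofReal (unitVol n * (R ^ (n:ℝ) - 1)) := by
        rw [hAdef, measure_diff (ball_subset_ball hR.le)
          measurableSet_ball.nullMeasurableSet measure_ball_lt_top.ne,
          volume_ball_eq n R hR0.le, volume_ball_eq n 1 zero_le_one, Real.one_rpow, mul_one,
          ← ENNReal.ofReal_sub _ hν.le]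
        ring_nf
      -- lower bound for weakNorm
      have hwn : ENNReal.ofReal lam * (volume A) ^ (((n:ℝ) - β) / n)
          ≤ weakNorm n β (fracHardy n β f) := by
        refine le_trans ?_ (le_iSup₂ (f := fun l (_ : 0 < l) =>
          ENNReal.ofReal l *
            (volume {x : EuclideanSpace ℝ (Fin n) | l < |fracHardy n β f x|})
              ^ (((n:ℝ) - β) / n)) lam hlam)
        exact mul_le_mul_right (ENNReal.rpow_le_rpow (measure_mono hsub) hq.le) _
      have hCb := hC f hfint
      rw [hIf] at hCb
      have hchain : ENNReal.ofReal lam * (volume A) ^ (((n:ℝ) - β) / n)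
          ≤ C * ENNReal.ofReal (unitVol n) := le_trans hwn hCb
      -- compute the left side
      have hRinv : R ^ (n:ℝ) - 1 = R ^ (n:ℝ) * (1 - R ^ (-(n:ℝ))) := by
        rw [mul_sub, mul_one, ← Real.rpow_add hR0, add_neg_cancel, Real.rpow_zero]
      have h1R : (0:ℝ) < 1 - R ^ (-(n:ℝ)) := by
        have : R ^ (-(n:ℝ)) < 1 := by
          rw [Real.rpow_neg hR0.le]
          exact inv_lt_one_of_one_lt₀ hRn
        linarith
      have hlhs : lam * (unitVol n * (R ^ (n:ℝ) - 1)) ^ (((n:ℝ) - β) / n)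
          = (1 - R ^ (-(n:ℝ))) ^ (((n:ℝ) - β) / n) * unitVol n := by
        rw [hlamdef, hRinv, show unitVol n * (R ^ (n:ℝ) * (1 - R ^ (-(n:ℝ))))
            = (unitVol n * R ^ (n:ℝ)) * (1 - R ^ (-(n:ℝ))) by ring,
          Real.mul_rpow (by positivity) h1R.le, hexp, Real.rpow_neg hBpos.le]
        have hBq : (0:ℝ) < (unitVol n * R ^ (n:ℝ)) ^ (((n:ℝ) - β) / n) :=
          Real.rpow_pos_of_pos hBpos _
        field_simp
      rw [hvolA, ENNReal.ofReal_rpow_of_nonneg (mul_nonneg hν.le (by linarith)) hq.le,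
        ← ENNReal.ofReal_mul hlam.le, hlhs,
        ENNReal.ofReal_mul (by positivity)] at hchain
      exact (ENNReal.mul_le_mul_iff_left (ENNReal.ofReal_pos.mpr hν).ne' ENNReal.ofReal_ne_top).mp hchain
    -- pass to the limit R → ∞
    have htend : Filter.Tendsto
        (fun R : ℝ => ENNReal.ofReal ((1 - R ^ (-(n:ℝ))) ^ (((n:ℝ) - β) / n)))
        Filter.atTop (nhds 1) := by
      have h0 : Filter.Tendsto (fun R : ℝ => R ^ (-(n:ℝ))) Filter.atTop (nhds 0) :=
        tendsto_rpow_neg_atTop hn0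
      have h1 : Filter.Tendsto (fun R : ℝ => 1 - R ^ (-(n:ℝ))) Filter.atTop (nhds 1) := by
        simpa using Filter.Tendsto.sub tendsto_const_nhds h0
      have h2 : Filter.Tendsto (fun R : ℝ => (1 - R ^ (-(n:ℝ))) ^ (((n:ℝ) - β) / n))
          Filter.atTop (nhds 1) := by
        have hc := (Real.continuousAt_rpow_const 1 (((n:ℝ) - β) / n)
          (Or.inl one_ne_zero)).tendsto.comp h1
        simpa [Function.comp_def] using hc
      have h3 := (ENNReal.continuous_ofReal.tendsto 1).comp h2
      simpa [Function.comp_def] using h3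
    exact le_of_tendsto htend (Filter.eventually_atTop.mpr
      ⟨2, fun R hR => key R (by linarith)⟩)
end

section
/- For 1 < p < ∞, f a nonnegative radial function on ℝⁿ with f(x) = F(|x|), the spherical Hardy operator admits the pointwise representation 𝓗f(x) = (1/ν_n) ∫_{B(0,1)} F(|x||y|) dy, and consequently by Minkowski's integral inequality ‖𝓗f‖_{L^p(ℝⁿ)} ≤ (1/ν_n) ∫_{B(0,1)} |y|^{-n/p} dy · ‖f‖_{L^p(ℝⁿ)} = (p/(p-1)) ‖f‖_{L^p(ℝⁿ)}. -/
open MeasureTheory Set ENNReal Metric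

section MinkowskiHelpers

open Function Filter

private theorem rpow_iSup_nat' (u : ℕ → ℝ≥0∞) (hu : Monotone u) {s : ℝ} (hs : 0 ≤ s) :
    (⨆ k, u k) ^ s = ⨆ k, u k ^ s := by
  have h1 : Tendsto u atTop (nhds (⨆ k, u k)) := tendsto_atTop_iSup hu
  have h2 := ((ENNReal.continuous_rpow_const (y := s)).continuousAt).tendsto.comp h1
  have h3 : Tendsto (fun k => u k ^ s) atTop (nhds (⨆ k, u k ^ s)) :=
    tendsto_atTop_iSup fun a b hab => ENNReal.rpow_le_rpow (hu hab) hs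
  exact tendsto_nhds_unique h2 h3

private theorem iSup_min_nat' (a : ℝ≥0∞) : ⨆ k : ℕ, min a (k : ℝ≥0∞) = a := by
  refine le_antisymm (iSup_le fun k => min_le_left _ _) ?_
  rcases eq_or_ne a ⊤ with rfl | ha
  · refine le_iSup_iff.mpr fun b hb => ?_
    have : ∀ k : ℕ, (k : ℝ≥0∞) ≤ b := fun k => le_trans (by simp) (hb k)
    simpa using (ENNReal.iSup_natCast).symm.trans_le (iSup_le this)
  · obtain ⟨k, hk⟩ := ENNReal.exists_nat_gt ha
    exact le_iSup_of_le k (le_of_eq (min_eq_left hk.le).symm)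

private theorem iSup_eq_iSup_of_eventually' (u v : ℕ → ℝ≥0∞) (hle : ∀ k, u k ≤ v k)
    (hv : Monotone v) (m : ℕ) (h : ∀ k, m ≤ k → u k = v k) : ⨆ k, u k = ⨆ k, v k := by
  refine le_antisymm (iSup_mono hle) (iSup_le fun k => ?_)
  calc v k ≤ v (max k m) := hv (le_max_left _ _)
    _ = u (max k m) := (h _ (le_max_right _ _)).symm
    _ ≤ ⨆ k, u k := le_iSup _ _

/-- Minkowski's integral inequality for `ℝ≥0∞`-valued functions: case of a finite
left-hand side. -/
private theorem mink_fin {α β : Type*} [MeasurableSpace α] [MeasurableSpace β]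
    (μ : Measure α) (ν : Measure β) [SFinite μ] [SFinite ν]
    {p q : ℝ} (hpq : p.HolderConjugate q) (f : α → β → ℝ≥0∞)
    (hf : Measurable (uncurry f))
    (hA : (∫⁻ x, (∫⁻ y, f x y ∂ν) ^ p ∂μ) ≠ ∞) :
    (∫⁻ x, (∫⁻ y, f x y ∂ν) ^ p ∂μ) ^ (1 / p)
      ≤ ∫⁻ y, (∫⁻ x, f x y ^ p ∂μ) ^ (1 / p) ∂ν := by
  set Φ : α → ℝ≥0∞ := fun x => ∫⁻ y, f x y ∂ν with hΦ
  have hΦm : Measurable Φ := hf.lintegral_prod_right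
  set A : ℝ≥0∞ := ∫⁻ x, Φ x ^ p ∂μ with hAdef
  set R : ℝ≥0∞ := ∫⁻ y, (∫⁻ x, f x y ^ p ∂μ) ^ (1 / p) ∂ν with hR
  have hp1 : (1 : ℝ) < p := hpq.lt
  have hp0 : (0 : ℝ) < p := by linarith
  by_cases hA0 : A = 0
  · rw [hA0, ENNReal.zero_rpow_of_pos (by positivity)]; exact zero_le
  have hq1 : (1 : ℝ) < q := hpq.symm.lt
  have hq0 : (0 : ℝ) < q := by linarith
  have hAq' : A ^ (1 / q) ≠ ∞ := ENNReal.rpow_ne_top_of_nonneg (by positivity) hA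
  have key : A ≤ R * A ^ (1 / q) := by
    have h1 : A = ∫⁻ x, Φ x * Φ x ^ (p - 1) ∂μ := by
      refine lintegral_congr fun x => ?_
      calc Φ x ^ p = Φ x ^ (1 + (p - 1)) := by ring_nf
        _ = Φ x ^ (1 : ℝ) * Φ x ^ (p - 1) :=
            ENNReal.rpow_add_of_nonneg _ _ zero_le_one (by linarith)
        _ = Φ x * Φ x ^ (p - 1) := by rw [ENNReal.rpow_one]
    have h2 : ∀ x, Φ x * Φ x ^ (p - 1) = ∫⁻ y, f x y * Φ x ^ (p - 1) ∂ν := fun x => by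
      have hmx : Measurable fun y => f x y := hf.comp measurable_prodMk_left
      rw [lintegral_mul_const _ hmx]
    have h3 : (∫⁻ x, ∫⁻ y, f x y * Φ x ^ (p - 1) ∂ν ∂μ)
        = ∫⁻ y, ∫⁻ x, f x y * Φ x ^ (p - 1) ∂μ ∂ν := by
      apply lintegral_lintegral_swap
      exact (hf.mul ((hΦm.comp measurable_fst).pow_const _)).aemeasurable
    have h4 : ∀ y, (∫⁻ x, f x y * Φ x ^ (p - 1) ∂μ)
        ≤ (∫⁻ x, f x y ^ p ∂μ) ^ (1 / p) * (∫⁻ x, (Φ x ^ (p - 1)) ^ q ∂μ) ^ (1 / q) := fun y =>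
      ENNReal.lintegral_mul_le_Lp_mul_Lq μ hpq
        ((hf.comp measurable_prodMk_right).aemeasurable)
        ((hΦm.pow_const _).aemeasurable)
    have h5 : ∀ x, (Φ x ^ (p - 1)) ^ q = Φ x ^ p := fun x => by
      rw [← ENNReal.rpow_mul, hpq.sub_one_mul_conj]
    calc A = ∫⁻ y, ∫⁻ x, f x y * Φ x ^ (p - 1) ∂μ ∂ν := by
          rw [h1]; simp_rw [h2]; exact h3
      _ ≤ ∫⁻ y, (∫⁻ x, f x y ^ p ∂μ) ^ (1 / p) * (∫⁻ x, (Φ x ^ (p - 1)) ^ q ∂μ) ^ (1 / q) ∂ν :=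
          lintegral_mono h4
      _ = R * A ^ (1 / q) := by
          simp_rw [h5]
          rw [← hAdef, lintegral_mul_const' _ _ hAq']
  have hAq : A ^ (1 / q) ≠ 0 := by
    intro h
    rcases ENNReal.rpow_eq_zero_iff.mp h with ⟨h1, _⟩ | ⟨_, h2⟩
    · exact hA0 h1
    · have : (0 : ℝ) < 1 / q := by positivity
      linarith
  have hdiv : A / A ^ (1 / q) ≤ R :=
    (ENNReal.div_le_iff_le_mul (Or.inl hAq) (Or.inl hAq')).mpr key
  calc (A : ℝ≥0∞) ^ (1 / p) = A ^ ((1 : ℝ) + -(1 / q)) := by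
        congr 1
        have h := hpq.inv_add_inv_eq_one
        rw [one_div, one_div]
        linarith
    _ = A ^ (1 : ℝ) * A ^ (-(1 / q)) := ENNReal.rpow_add _ _ hA0 hA
    _ = A / A ^ (1 / q) := by
        rw [ENNReal.rpow_one, ENNReal.rpow_neg]; exact (div_eq_mul_inv _ _).symm
    _ ≤ R := hdiv

/-- Minkowski's integral inequality for `ℝ≥0∞`-valued functions. -/
private theorem mink {α β : Type*} [MeasurableSpace α] [MeasurableSpace β]
    (μ : Measure α) (ν : Measure β) [SigmaFinite μ] [SigmaFinite ν]
    {p q : ℝ} (hpq : p.HolderConjugate q) (f : α → β → ℝ≥0∞)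
    (hf : Measurable (uncurry f)) :
    (∫⁻ x, (∫⁻ y, f x y ∂ν) ^ p ∂μ) ^ (1 / p)
      ≤ ∫⁻ y, (∫⁻ x, f x y ^ p ∂μ) ^ (1 / p) ∂ν := by
  have hp0 : (0 : ℝ) < p := hpq.pos
  set S : ℕ → Set α := spanningSets μ
  set T : ℕ → Set β := spanningSets ν
  set R : ℝ≥0∞ := ∫⁻ y, (∫⁻ x, f x y ^ p ∂μ) ^ (1 / p) ∂ν with hR
  set K : ℕ → α → ℝ≥0∞ := fun k x => ∫⁻ y in T k, min (f x y) k ∂ν with hK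
  have hKm : ∀ k, Measurable (K k) := fun k =>
    Measurable.lintegral_prod_right (f := fun x y => min (f x y) k)
      (hf.min measurable_const)
  have hKmono : ∀ x, Monotone fun k => K k x := by
    intro x k l hkl
    refine lintegral_mono' (Measure.restrict_mono (monotone_spanningSets ν hkl) le_rfl)
      fun y => min_le_min le_rfl (Nat.cast_le.mpr hkl)
  set g : ℕ → α → ℝ≥0∞ := fun k => (S k).indicator fun x => K k x ^ p with hg
  have hgm : ∀ k, Measurable (g k) :=
    fun k => ((hKm k).pow_const _).indicator (measurableSet_spanningSets μ k)
  have hgmono : Monotone g := by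
    intro k l hkl x
    rcases em (x ∈ S k) with hx | hx
    · rw [hg]
      simp only [indicator_of_mem hx, indicator_of_mem (show x ∈ S l from monotone_spanningSets μ hkl hx)]
      exact ENNReal.rpow_le_rpow (hKmono x hkl) hp0.le
    · simp [hg, indicator_of_notMem hx]
  have hsup : ∀ x, (⨆ k, g k x) = (∫⁻ y, f x y ∂ν) ^ p := by
    intro x
    obtain ⟨m, hm⟩ : ∃ m, x ∈ S m := by
      have : x ∈ ⋃ i, S i := by rw [iUnion_spanningSets]; trivial
      exact mem_iUnion.mp this
    have humono : Monotone fun k => K k x ^ p :=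
      fun a b hab => ENNReal.rpow_le_rpow (hKmono x hab) hp0.le
    have h1 : (⨆ k, g k x) = ⨆ k, K k x ^ p := by
      refine iSup_eq_iSup_of_eventually' _ _ (fun k => ?_) humono m fun k hk => ?_
      · exact indicator_le_self _ _ x
      · exact indicator_of_mem (monotone_spanningSets μ hk hm) _
    have h2 : (⨆ k, K k x) = ∫⁻ y, f x y ∂ν := by
      have hKind : ∀ k, K k x = ∫⁻ y, (T k).indicator (fun y => min (f x y) k) y ∂ν :=
        fun k => (lintegral_indicator (measurableSet_spanningSets ν k) _).symm
      have hmx : Measurable fun y => f x y := hf.comp measurable_prodMk_left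
      have hmono' : Monotone fun k => (fun y => (T k).indicator (fun y => min (f x y) k) y) := by
        intro k l hkl y
        rcases em (y ∈ T k) with hy | hy
        · simp only [indicator_of_mem hy, indicator_of_mem (show y ∈ T l from monotone_spanningSets ν hkl hy)]
          exact min_le_min le_rfl (Nat.cast_le.mpr hkl)
        · simp [indicator_of_notMem hy]
      calc (⨆ k, K k x) = ⨆ k, ∫⁻ y, (T k).indicator (fun y => min (f x y) k) y ∂ν := by
            simp_rw [hKind]
        _ = ∫⁻ y, ⨆ k, (T k).indicator (fun y => min (f x y) k) y ∂ν := by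
            rw [lintegral_iSup (fun k => (hmx.min measurable_const).indicator
              (measurableSet_spanningSets ν k)) hmono']
        _ = ∫⁻ y, f x y ∂ν := by
            refine lintegral_congr fun y => ?_
            obtain ⟨m2, hm2⟩ : ∃ m2, y ∈ T m2 := by
              have : y ∈ ⋃ i, T i := by rw [iUnion_spanningSets]; trivial
              exact mem_iUnion.mp this
            rw [iSup_eq_iSup_of_eventually' _ (fun k => min (f x y) (k : ℝ≥0∞))
              (fun k => indicator_le_self _ _ y)
              (fun a b hab => min_le_min le_rfl (Nat.cast_le.mpr hab)) m2
              (fun k hk => indicator_of_mem (monotone_spanningSets ν hk hm2) _)]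
            exact iSup_min_nat' _
    rw [h1, ← rpow_iSup_nat' _ (fun a b hab => hKmono x hab) hp0.le, h2]
  have hAk : ∀ k, (∫⁻ x, g k x ∂μ) ≤ R ^ p := by
    intro k
    haveI : IsFiniteMeasure (μ.restrict (S k)) :=
      ⟨by rw [Measure.restrict_apply_univ]; exact measure_spanningSets_lt_top μ k⟩
    haveI : IsFiniteMeasure (ν.restrict (T k)) :=
      ⟨by rw [Measure.restrict_apply_univ]; exact measure_spanningSets_lt_top ν k⟩
    have hAkt : (∫⁻ x, g k x ∂μ) ≠ ⊤ := by
      have hb : ∀ x, K k x ^ p ≤ ((k : ℝ≥0∞) * ν (T k)) ^ p := by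
        intro x
        refine ENNReal.rpow_le_rpow ?_ hp0.le
        calc K k x ≤ ∫⁻ _ in T k, (k : ℝ≥0∞) ∂ν :=
              lintegral_mono fun y => min_le_right _ _
          _ = (k : ℝ≥0∞) * ν (T k) := by rw [setLIntegral_const]
      have : (∫⁻ x, g k x ∂μ) ≤ ((k : ℝ≥0∞) * ν (T k)) ^ p * μ (S k) := by
        rw [hg, lintegral_indicator (measurableSet_spanningSets μ k)]
        calc (∫⁻ x in S k, K k x ^ p ∂μ) ≤ ∫⁻ _ in S k, ((k : ℝ≥0∞) * ν (T k)) ^ p ∂μ :=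
              lintegral_mono fun x => hb x
          _ = ((k : ℝ≥0∞) * ν (T k)) ^ p * μ (S k) := by rw [setLIntegral_const]
      refine ne_top_of_le_ne_top ?_ this
      exact (ENNReal.mul_lt_top
        (ENNReal.rpow_lt_top_of_nonneg hp0.le
          (ENNReal.mul_lt_top (ENNReal.natCast_lt_top _) (measure_spanningSets_lt_top ν k)).ne)
        (measure_spanningSets_lt_top μ k)).ne
    have hgid : (∫⁻ x, g k x ∂μ) = ∫⁻ x, (∫⁻ y, min (f x y) k ∂ν.restrict (T k)) ^ p
        ∂μ.restrict (S k) := by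
      rw [hg, lintegral_indicator (measurableSet_spanningSets μ k)]
    have hfin := mink_fin (μ.restrict (S k)) (ν.restrict (T k)) hpq
      (fun x y => min (f x y) k) (hf.min measurable_const) (by rw [← hgid]; exact hAkt)
    have hRk : (∫⁻ y, (∫⁻ x, min (f x y) (k : ℝ≥0∞) ^ p ∂μ.restrict (S k)) ^ (1 / p)
        ∂ν.restrict (T k)) ≤ R := by
      refine le_trans (setLIntegral_le_lintegral _ _) (lintegral_mono fun y => ?_)
      refine ENNReal.rpow_le_rpow ?_ (by positivity)
      refine le_trans (setLIntegral_le_lintegral _ _) (lintegral_mono fun x => ?_)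
      exact ENNReal.rpow_le_rpow (min_le_left _ _) hp0.le
    have h3 : (∫⁻ x, g k x ∂μ) ^ (1 / p) ≤ R := by
      rw [hgid]; exact le_trans hfin hRk
    calc (∫⁻ x, g k x ∂μ) = ((∫⁻ x, g k x ∂μ) ^ (1 / p)) ^ p := by
          rw [← ENNReal.rpow_mul, one_div, inv_mul_cancel₀ hp0.ne', ENNReal.rpow_one]
      _ ≤ R ^ p := ENNReal.rpow_le_rpow h3 hp0.le
  have hA : (∫⁻ x, (∫⁻ y, f x y ∂ν) ^ p ∂μ) = ⨆ k, ∫⁻ x, g k x ∂μ := by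
    rw [← lintegral_iSup hgm hgmono]
    exact lintegral_congr fun x => (hsup x).symm
  rw [hA]
  have hle : (⨆ k, ∫⁻ x, g k x ∂μ) ≤ R ^ p := iSup_le hAk
  calc (⨆ k, ∫⁻ x, g k x ∂μ) ^ (1 / p) ≤ (R ^ p) ^ (1 / p) :=
        ENNReal.rpow_le_rpow hle (by positivity)
    _ = R := by rw [← ENNReal.rpow_mul, mul_one_div, div_self hp0.ne', ENNReal.rpow_one]

end MinkowskiHelpers

section EuclideanHelpers

open Function Filter

private theorem euclidean_nontrivial' {n : ℕ} (hn : 1 ≤ n) :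
    Nontrivial (EuclideanSpace ℝ (Fin n)) :=
  by haveI : Nonempty (Fin n) := ⟨⟨0, hn⟩⟩; infer_instance

private theorem lintegral_norm_smul' {n : ℕ} (G : ℝ → ℝ≥0∞) (hG : Measurable G) {t : ℝ}
    (ht : 0 < t) :
    (∫⁻ x : EuclideanSpace ℝ (Fin n), G (t * ‖x‖))
      = ENNReal.ofReal (t ^ (-(n : ℝ))) * ∫⁻ x : EuclideanSpace ℝ (Fin n), G ‖x‖ := by
  have h1 : ∀ x : EuclideanSpace ℝ (Fin n), G (t * ‖x‖) = (fun y => G ‖y‖) (t • x) := by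
    intro x
    simp [norm_smul, abs_of_pos ht]
  have hGn : Measurable fun y : EuclideanSpace ℝ (Fin n) => G ‖y‖ := hG.comp measurable_norm
  simp_rw [h1]
  rw [← lintegral_map hGn (measurable_const_smul t),
    Measure.map_addHaar_smul volume ht.ne', lintegral_smul_measure]
  congr 1
  rw [finrank_euclideanSpace_fin, abs_of_nonneg (by positivity),
    Real.rpow_neg ht.le, Real.rpow_natCast]

private theorem lintegral_ball_smul' {n : ℕ} (F : ℝ → ℝ≥0∞) (hF : Measurable F) {R : ℝ}
    (hR : 0 < R) :
    (∫⁻ y in ball (0 : EuclideanSpace ℝ (Fin n)) R, F ‖y‖)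
      = ENNReal.ofReal (R ^ n) *
        ∫⁻ y in ball (0 : EuclideanSpace ℝ (Fin n)) 1, F (R * ‖y‖) := by
  have hmap := Measure.map_addHaar_smul (volume : Measure (EuclideanSpace ℝ (Fin n))) hR.ne'
  have hpre : (fun x : EuclideanSpace ℝ (Fin n) => R • x) ⁻¹' ball 0 R = ball 0 1 := by
    ext x
    simp only [mem_preimage, mem_ball_zero_iff, norm_smul, Real.norm_eq_abs,
      abs_of_pos hR]
    constructor
    · intro h; nlinarith
    · intro h; nlinarith
  have key : ∫⁻ y in ball (0 : EuclideanSpace ℝ (Fin n)) R, F ‖y‖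
      ∂(Measure.map (fun x : EuclideanSpace ℝ (Fin n) => R • x) volume)
      = ∫⁻ x in ball (0 : EuclideanSpace ℝ (Fin n)) 1, F (R * ‖x‖) := by
    have hFn : Measurable fun y : EuclideanSpace ℝ (Fin n) => F ‖y‖ := hF.comp measurable_norm
    rw [setLIntegral_map measurableSet_ball hFn (measurable_const_smul R), hpre]
    refine setLIntegral_congr_fun measurableSet_ball (fun x _ => ?_)
    simp [norm_smul, abs_of_pos hR]
  rw [hmap, Measure.restrict_smul, lintegral_smul_measure] at key
  have hRn : ENNReal.ofReal ((R ^ Module.finrank ℝ (EuclideanSpace ℝ (Fin n)))⁻¹)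
      = (ENNReal.ofReal (R ^ n))⁻¹ := by
    rw [finrank_euclideanSpace_fin, ENNReal.ofReal_inv_of_pos (by positivity)]
  rw [abs_of_nonneg (by positivity), hRn] at key
  have h0 : ENNReal.ofReal (R ^ n) ≠ 0 := by
    simp [ENNReal.ofReal_eq_zero]; positivity
  have htop : ENNReal.ofReal (R ^ n) ≠ ⊤ := ENNReal.ofReal_ne_top
  calc (∫⁻ y in ball (0 : EuclideanSpace ℝ (Fin n)) R, F ‖y‖)
      = ENNReal.ofReal (R ^ n) * ((ENNReal.ofReal (R ^ n))⁻¹ *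
          ∫⁻ y in ball (0 : EuclideanSpace ℝ (Fin n)) R, F ‖y‖) := by
        rw [← mul_assoc, ENNReal.mul_inv_cancel h0 htop, one_mul]
    _ = _ := by rw [← key, smul_eq_mul]

private theorem lintegral_fun_norm_polar' {n : ℕ} (hn : 1 ≤ n) (g : ℝ → ℝ≥0∞)
    (hg : Measurable g) :
    (∫⁻ x : EuclideanSpace ℝ (Fin n), g ‖x‖)
      = (n : ℝ≥0∞) * volume (ball (0 : EuclideanSpace ℝ (Fin n)) 1) *
        ∫⁻ r in Ioi (0 : ℝ), ENNReal.ofReal (r ^ (n - 1)) * g r := by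
  haveI := euclidean_nontrivial' hn
  set μ : Measure (EuclideanSpace ℝ (Fin n)) := volume with hμ
  have hdim : Module.finrank ℝ (EuclideanSpace ℝ (Fin n)) = n := finrank_euclideanSpace_fin
  have step1 : (∫⁻ x : EuclideanSpace ℝ (Fin n), g ‖x‖ ∂μ)
      = ∫⁻ x : ({(0 : EuclideanSpace ℝ (Fin n))}ᶜ : Set _), g ‖(x : EuclideanSpace ℝ (Fin n))‖
        ∂(μ.comap Subtype.val) := by
    rw [lintegral_subtype_comap (measurableSet_singleton _).compl
      (fun x : EuclideanSpace ℝ (Fin n) => g ‖x‖), restrict_compl_singleton]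
  have hmp := μ.measurePreserving_homeomorphUnitSphereProd
  have step2 : (∫⁻ x : ({(0 : EuclideanSpace ℝ (Fin n))}ᶜ : Set _),
        g ‖(x : EuclideanSpace ℝ (Fin n))‖ ∂(μ.comap Subtype.val))
      = ∫⁻ z : sphere (0 : EuclideanSpace ℝ (Fin n)) 1 × Ioi (0 : ℝ), g z.2
        ∂(μ.toSphere.prod (.volumeIoiPow (Module.finrank ℝ (EuclideanSpace ℝ (Fin n)) - 1))) :=
    by rw [← hmp.lintegral_comp_emb (Homeomorph.measurableEmbedding _)
      (fun z => g z.2.1)]; simp only [homeomorphUnitSphereProd_apply_snd_coe]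
  have hmz : Measurable fun z : sphere (0 : EuclideanSpace ℝ (Fin n)) 1 × Ioi (0 : ℝ) =>
      g (z.2 : ℝ) := hg.comp (measurable_subtype_coe.comp measurable_snd)
  have step3 : (∫⁻ z : sphere (0 : EuclideanSpace ℝ (Fin n)) 1 × Ioi (0 : ℝ), g z.2
        ∂(μ.toSphere.prod (.volumeIoiPow (Module.finrank ℝ (EuclideanSpace ℝ (Fin n)) - 1))))
      = μ.toSphere univ * ∫⁻ r : Ioi (0 : ℝ), g r
          ∂(Measure.volumeIoiPow (Module.finrank ℝ (EuclideanSpace ℝ (Fin n)) - 1)) := by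
    rw [lintegral_prod _ hmz.aemeasurable]
    simp only [lintegral_const]
    rw [mul_comm]
  have step4 : (∫⁻ r : Ioi (0 : ℝ), g r
        ∂(Measure.volumeIoiPow (Module.finrank ℝ (EuclideanSpace ℝ (Fin n)) - 1)))
      = ∫⁻ r in Ioi (0 : ℝ), ENNReal.ofReal (r ^ (n - 1)) * g r := by
    have hd : Measurable fun r : Ioi (0:ℝ) =>
        ENNReal.ofReal ((r : ℝ) ^ (Module.finrank ℝ (EuclideanSpace ℝ (Fin n)) - 1)) :=
      (measurable_subtype_coe.pow_const _).ennreal_ofReal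
    have hgc : Measurable fun r : Ioi (0:ℝ) => g (r : ℝ) := hg.comp measurable_subtype_coe
    rw [Measure.volumeIoiPow, lintegral_withDensity_eq_lintegral_mul _ hd hgc, hdim,
      ← lintegral_subtype_comap measurableSet_Ioi
        (fun a : ℝ => ENNReal.ofReal (a ^ (n - 1)) * g a)]
    rfl
  rw [step1, step2, step3, step4, Measure.toSphere_apply_univ, hdim]

private theorem part3' {n : ℕ} (hn : 1 ≤ n) {p : ℝ} (hp : 1 < p) :
    (∫⁻ y in ball (0 : EuclideanSpace ℝ (Fin n)) 1, ENNReal.ofReal (‖y‖ ^ (-(n : ℝ) / p)))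
      = volume (ball (0 : EuclideanSpace ℝ (Fin n)) 1) * ENNReal.ofReal (p / (p - 1)) := by
  have hp0 : (0 : ℝ) < p := by linarith
  set α : ℝ := -(n : ℝ) / p with hα
  set β : ℝ := (n : ℝ) - 1 + α with hβdef
  have hn0 : (0 : ℝ) < n := by exact_mod_cast hn
  have hβ1 : β + 1 = (n : ℝ) * (1 - 1 / p) := by rw [hβdef, hα]; field_simp; ring
  have hβpos : 0 < β + 1 := by
    rw [hβ1]
    have : 0 < 1 - 1 / p := by
      have : 1 / p < 1 := by rw [div_lt_one hp0]; linarith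
      linarith
    positivity
  have hβ : (-1 : ℝ) < β := by linarith
  set G : ℝ → ℝ≥0∞ := fun r => (Iio (1 : ℝ)).indicator (fun r => ENNReal.ofReal (r ^ α)) r
    with hG
  have hGm : Measurable G := Measurable.indicator (by fun_prop) measurableSet_Iio
  have h1 : (∫⁻ y in ball (0 : EuclideanSpace ℝ (Fin n)) 1,
      ENNReal.ofReal (‖y‖ ^ α)) = ∫⁻ y : EuclideanSpace ℝ (Fin n), G ‖y‖ := by
    rw [← lintegral_indicator measurableSet_ball]
    refine lintegral_congr fun y => ?_
    by_cases hy : ‖y‖ < 1 <;>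
      simp [hG, indicator_apply, mem_ball_zero_iff, hy]
  have h2 := lintegral_fun_norm_polar' hn G hGm
  have h3 : (∫⁻ r in Ioi (0 : ℝ), ENNReal.ofReal (r ^ (n - 1)) * G r)
      = ∫⁻ r in Ioo (0 : ℝ) 1, ENNReal.ofReal (r ^ β) := by
    have hind : ∀ r : ℝ, ENNReal.ofReal (r ^ (n - 1)) * G r
        = (Iio (1 : ℝ)).indicator
            (fun r => ENNReal.ofReal (r ^ (n - 1)) * ENNReal.ofReal (r ^ α)) r := by
      intro r
      rw [hG]
      simp only [Set.indicator_apply]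
      split
      · rfl
      · exact mul_zero _
    simp_rw [hind]
    rw [lintegral_indicator measurableSet_Iio, Measure.restrict_restrict measurableSet_Iio]
    have hset : Iio (1 : ℝ) ∩ Ioi 0 = Ioo 0 1 := by ext r; simp [and_comm]
    rw [hset]
    refine setLIntegral_congr_fun measurableSet_Ioo (fun r hr => ?_)
    rw [← ENNReal.ofReal_mul (pow_nonneg hr.1.le _)]
    congr 1
    rw [← Real.rpow_natCast r (n - 1), ← Real.rpow_add hr.1, hβdef]
    congr 1
    rw [Nat.cast_sub hn, Nat.cast_one]
  have h4 : (∫⁻ r in Ioo (0 : ℝ) 1, ENNReal.ofReal (r ^ β))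
      = ENNReal.ofReal (1 / (β + 1)) := by
    have hint : IntegrableOn (fun r : ℝ => r ^ β) (Ioo 0 1) volume := by
      have := (intervalIntegral.intervalIntegrable_rpow' hβ (a := 0) (b := 1)).1
      exact this.mono_set Ioo_subset_Ioc_self
    rw [← ofReal_integral_eq_lintegral_ofReal hint ?nonneg]
    case nonneg =>
      filter_upwards [ae_restrict_mem measurableSet_Ioo] with r hr
      exact Real.rpow_nonneg hr.1.le β
    congr 1
    rw [← integral_Ioc_eq_integral_Ioo, ← intervalIntegral.integral_of_le zero_le_one,
      integral_rpow (Or.inl hβ)]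
    rw [Real.one_rpow, Real.zero_rpow (by linarith), sub_zero, one_div]
  rw [h1, h2, h3, h4]
  rw [mul_comm ((n : ℝ≥0∞)) (volume (ball (0 : EuclideanSpace ℝ (Fin n)) 1)), mul_assoc]
  congr 1
  rw [← ENNReal.ofReal_natCast n, ← ENNReal.ofReal_mul (by positivity)]
  congr 1
  rw [mul_one_div, div_eq_div_iff hβpos.ne' (by linarith : p - 1 ≠ 0), hβ1]
  field_simp

end EuclideanHelpers

/-- For a nonnegative radial function `f(x) = F(|x|)`, the spherical Hardy operator has the
pointwise representation `𝓗f(x) = (1/ν_n) ∫_{B(0,1)} F(|x||y|) dy`, hence (by Minkowski's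
integral inequality) `‖𝓗f‖_{L^p} ≤ (p/(p-1)) ‖f‖_{L^p}`, where
`(1/ν_n) ∫_{B(0,1)} |y|^{-n/p} dy = p/(p-1)`. -/
theorem sphericalHardy_radial (n : ℕ) (hn : 1 ≤ n) (p : ℝ) (hp : 1 < p)
    (F : ℝ → ℝ≥0∞) (hF : Measurable F) :
    (∀ x : EuclideanSpace ℝ (Fin n), x ≠ 0 →
      (volume (ball (0 : EuclideanSpace ℝ (Fin n)) ‖x‖))⁻¹ *
          (∫⁻ y in closedBall (0 : EuclideanSpace ℝ (Fin n)) ‖x‖, F ‖y‖)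
        = (volume (ball (0 : EuclideanSpace ℝ (Fin n)) 1))⁻¹ *
          ∫⁻ y in ball (0 : EuclideanSpace ℝ (Fin n)) 1, F (‖x‖ * ‖y‖)) ∧
    ((∫⁻ x : EuclideanSpace ℝ (Fin n),
          ((volume (ball (0 : EuclideanSpace ℝ (Fin n)) ‖x‖))⁻¹ *
            ∫⁻ y in closedBall (0 : EuclideanSpace ℝ (Fin n)) ‖x‖, F ‖y‖) ^ p) ^ (1 / p)
        ≤ (volume (ball (0 : EuclideanSpace ℝ (Fin n)) 1))⁻¹ *
            (∫⁻ y in ball (0 : EuclideanSpace ℝ (Fin n)) 1,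
              ENNReal.ofReal (‖y‖ ^ (-(n : ℝ) / p))) *
          (∫⁻ x : EuclideanSpace ℝ (Fin n), (F ‖x‖) ^ p) ^ (1 / p)) ∧
    (∫⁻ y in ball (0 : EuclideanSpace ℝ (Fin n)) 1, ENNReal.ofReal (‖y‖ ^ (-(n : ℝ) / p)))
      = volume (ball (0 : EuclideanSpace ℝ (Fin n)) 1) * ENNReal.ofReal (p / (p - 1)) := by
  haveI := euclidean_nontrivial' hn
  have hp0 : (0 : ℝ) < p := by linarith
  set c : ℝ≥0∞ := volume (ball (0 : EuclideanSpace ℝ (Fin n)) 1) with hc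
  have hc0 : c ≠ 0 := (measure_ball_pos volume 0 one_pos).ne'
  have hct : c ≠ ⊤ := measure_ball_lt_top.ne
  -- Part 1
  have part1 : ∀ x : EuclideanSpace ℝ (Fin n), x ≠ 0 →
      (volume (ball (0 : EuclideanSpace ℝ (Fin n)) ‖x‖))⁻¹ *
          (∫⁻ y in closedBall (0 : EuclideanSpace ℝ (Fin n)) ‖x‖, F ‖y‖)
        = c⁻¹ * ∫⁻ y in ball (0 : EuclideanSpace ℝ (Fin n)) 1, F (‖x‖ * ‖y‖) := by
    intro x hx
    have hR : 0 < ‖x‖ := norm_pos_iff.mpr hx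
    have hcb : (∫⁻ y in closedBall (0 : EuclideanSpace ℝ (Fin n)) ‖x‖, F ‖y‖)
        = ∫⁻ y in ball (0 : EuclideanSpace ℝ (Fin n)) ‖x‖, F ‖y‖ := by
      have hae : (closedBall (0 : EuclideanSpace ℝ (Fin n)) ‖x‖ : Set _)
          =ᵐ[volume] ball (0 : EuclideanSpace ℝ (Fin n)) ‖x‖ := by
        refine ae_eq_set.mpr ⟨?_, ?_⟩
        · rw [closedBall_diff_ball]
          exact Measure.addHaar_sphere _ _ _
        · rw [diff_eq_empty.mpr ball_subset_closedBall]
          exact measure_empty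
      rw [Measure.restrict_congr_set hae]
    have hvol : volume (ball (0 : EuclideanSpace ℝ (Fin n)) ‖x‖)
        = ENNReal.ofReal (‖x‖ ^ n) * c := by
      rw [Measure.addHaar_ball volume 0 hR.le, finrank_euclideanSpace_fin]
    have ha0 : ENNReal.ofReal (‖x‖ ^ n) ≠ 0 := by
      rw [Ne, ENNReal.ofReal_eq_zero, not_le]; exact pow_pos hR n
    have hat : ENNReal.ofReal (‖x‖ ^ n) ≠ ⊤ := ENNReal.ofReal_ne_top
    rw [hcb, hvol, lintegral_ball_smul' F hF hR,
      ENNReal.mul_inv (Or.inl ha0) (Or.inl hat),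
      mul_comm (ENNReal.ofReal (‖x‖ ^ n))⁻¹ c⁻¹, mul_assoc, ← mul_assoc
        (ENNReal.ofReal (‖x‖ ^ n))⁻¹,
      ENNReal.inv_mul_cancel ha0 hat, one_mul]
  refine ⟨part1, ?_, part3' hn hp⟩
  -- Part 2
  set ν : Measure (EuclideanSpace ℝ (Fin n)) :=
    volume.restrict (ball (0 : EuclideanSpace ℝ (Fin n)) 1) with hν
  set f : EuclideanSpace ℝ (Fin n) → EuclideanSpace ℝ (Fin n) → ℝ≥0∞ :=
    fun x y => c⁻¹ * F (‖x‖ * ‖y‖) with hf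
  have hfm : Measurable (Function.uncurry f) :=
    (hF.comp ((measurable_norm.comp measurable_fst).mul
      (measurable_norm.comp measurable_snd))).const_mul _
  have hpq : p.HolderConjugate (p / (p - 1)) := Real.HolderConjugate.conjExponent hp
  have hcinvt : c⁻¹ ≠ ⊤ := ENNReal.inv_ne_top.mpr hc0
  have h0 : ∀ᵐ x : EuclideanSpace ℝ (Fin n) ∂volume, x ≠ 0 := by
    have hset : {a : EuclideanSpace ℝ (Fin n) | ¬ a ≠ 0} = {0} := by ext a; simp
    rw [ae_iff, hset]
    exact measure_singleton 0
  set I : ℝ≥0∞ := ∫⁻ x : EuclideanSpace ℝ (Fin n), (F ‖x‖) ^ p with hI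
  set J : ℝ≥0∞ := ∫⁻ y in ball (0 : EuclideanSpace ℝ (Fin n)) 1,
    ENNReal.ofReal (‖y‖ ^ (-(n : ℝ) / p)) with hJ
  have stepA : (∫⁻ x : EuclideanSpace ℝ (Fin n),
        ((volume (ball (0 : EuclideanSpace ℝ (Fin n)) ‖x‖))⁻¹ *
          ∫⁻ y in closedBall (0 : EuclideanSpace ℝ (Fin n)) ‖x‖, F ‖y‖) ^ p)
      = ∫⁻ x, (∫⁻ y, f x y ∂ν) ^ p := by
    refine lintegral_congr_ae ?_
    filter_upwards [h0] with x hx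
    congr 1
    rw [part1 x hx, hν, hf]
    rw [lintegral_const_mul' _ _ hcinvt]
  have stepB := mink volume ν hpq f hfm
  have stepC : (∫⁻ y, (∫⁻ x, f x y ^ p ∂volume) ^ (1 / p) ∂ν) = c⁻¹ * J * I ^ (1 / p) := by
    have hptwise : ∀ᵐ y ∂ν, (∫⁻ x, f x y ^ p ∂volume) ^ (1 / p)
        = (c⁻¹ * I ^ (1 / p)) * ENNReal.ofReal (‖y‖ ^ (-(n : ℝ) / p)) := by
      refine ae_restrict_of_ae ?_
      filter_upwards [h0] with y hy
      have hy0 : 0 < ‖y‖ := norm_pos_iff.mpr hy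
      have hinner : (∫⁻ x, f x y ^ p ∂volume)
          = (c⁻¹) ^ p * (ENNReal.ofReal (‖y‖ ^ (-(n : ℝ))) * I) := by
        have h1 : ∀ x : EuclideanSpace ℝ (Fin n),
            f x y ^ p = (c⁻¹) ^ p * (F (‖y‖ * ‖x‖)) ^ p := by
          intro x
          rw [hf]
          rw [ENNReal.mul_rpow_of_nonneg _ _ hp0.le, mul_comm ‖x‖ ‖y‖]
        simp_rw [h1]
        rw [lintegral_const_mul' _ _
          (ENNReal.rpow_ne_top_of_nonneg hp0.le hcinvt)]
        congr 1
        exact lintegral_norm_smul' (fun r => F r ^ p) (hF.pow_const p) hy0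
      rw [hinner, ENNReal.mul_rpow_of_nonneg _ _ (by positivity),
        ENNReal.mul_rpow_of_nonneg _ _ (by positivity : (0:ℝ) ≤ 1/p),
        ← ENNReal.rpow_mul, mul_one_div, div_self hp0.ne', ENNReal.rpow_one,
        ENNReal.ofReal_rpow_of_pos (Real.rpow_pos_of_pos hy0 _),
        ← Real.rpow_mul (norm_nonneg y), mul_one_div]
      ring
    rw [lintegral_congr_ae hptwise,
      lintegral_const_mul (c⁻¹ * I ^ (1 / p))
        (by fun_prop : Measurable fun y : EuclideanSpace ℝ (Fin n) =>
          ENNReal.ofReal (‖y‖ ^ (-(n : ℝ) / p)))]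
    rw [hν, ← hJ]
    ring
  calc (∫⁻ x : EuclideanSpace ℝ (Fin n),
        ((volume (ball (0 : EuclideanSpace ℝ (Fin n)) ‖x‖))⁻¹ *
          ∫⁻ y in closedBall (0 : EuclideanSpace ℝ (Fin n)) ‖x‖, F ‖y‖) ^ p) ^ (1 / p)
      = (∫⁻ x, (∫⁻ y, f x y ∂ν) ^ p) ^ (1 / p) := by rw [stepA]
    _ ≤ ∫⁻ y, (∫⁻ x, f x y ^ p ∂volume) ^ (1 / p) ∂ν := stepB
    _ = c⁻¹ * J * I ^ (1 / p) := stepC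
end
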